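/- arXiv:2307.04566 — 15 statements merged into one kernel-verified Lean document; each statement's English description precedes it below -/
import Mathlib

section
/- Let d(X) = X⁴ + 2X³ − 7X² − 4X + 10 = (X² − 2)(X² + 2X − 5) ∈ ℤ[X], f(X) = 2X⁸ + 24X⁷ + 100X⁶ + 120X⁵ − 266X⁴ − 792X³ − 244X² + 912X + 721 and g(X) = 2X⁶ + 22X⁵ + 86X⁴ + 118X³ − 74X² − 334X − 228. Then f(X)² − d(X)·g(X)² = 1; in particular (X² − 2)(X² + 2X − 5) is Pellian over ℤ[X]. -/
open Polynomial

theorem explicit_pell_solution_order_four :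
    (2 * X ^ 8 + 24 * X ^ 7 + 100 * X ^ 6 + 120 * X ^ 5 - 266 * X ^ 4 - 792 * X ^ 3
        - 244 * X ^ 2 + 912 * X + 721 : Polynomial ℤ) ^ 2
      - ((X ^ 2 - 2) * (X ^ 2 + 2 * X - 5)) *
        (2 * X ^ 6 + 22 * X ^ 5 + 86 * X ^ 4 + 118 * X ^ 3 - 74 * X ^ 2 - 334 * X - 228) ^ 2
      = 1 ∧
    (X ^ 4 + 2 * X ^ 3 - 7 * X ^ 2 - 4 * X + 10 : Polynomial ℤ)
      = (X ^ 2 - 2) * (X ^ 2 + 2 * X - 5) ∧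
    ∃ f g : Polynomial ℤ, g ≠ 0 ∧
      f ^ 2 - ((X ^ 2 - 2) * (X ^ 2 + 2 * X - 5)) * g ^ 2 = 1 := by
  have h1 : (2 * X ^ 8 + 24 * X ^ 7 + 100 * X ^ 6 + 120 * X ^ 5 - 266 * X ^ 4 - 792 * X ^ 3
        - 244 * X ^ 2 + 912 * X + 721 : Polynomial ℤ) ^ 2
      - ((X ^ 2 - 2) * (X ^ 2 + 2 * X - 5)) *
        (2 * X ^ 6 + 22 * X ^ 5 + 86 * X ^ 4 + 118 * X ^ 3 - 74 * X ^ 2 - 334 * X - 228) ^ 2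
      = 1 := by ring
  refine ⟨h1, by ring, _, _, ?_, h1⟩
  intro h
  have := congrArg (Polynomial.eval 0) h
  simp at this
end

section
/- Let K be a field of characteristic different from 2 and let d ∈ K[X] be nonconstant and not a square in K[X]. Suppose f₁, g₁ ∈ K[X] satisfy f₁² − d·g₁² = 1 with g₁ ≠ 0, and that f₁ has minimal degree among all such nontrivial solutions (i.e., for all f, g ∈ K[X] with g ≠ 0 and f² − d·g² = 1, deg f₁ ≤ deg f). Define sequences fₙ, gₙ ∈ K[X] by f₀ = 1, g₀ = 0, f_{n+1} = f₁·fₙ + d·g₁·gₙ, g_{n+1} = f₁·gₙ + g₁·fₙ (so that fₙ + gₙ√d = (f₁ + g₁√d)ⁿ). Then for every pair f, g ∈ K[X] with f² − d·g² = 1 there exists n ∈ ℕ such that f = fₙ or f = −fₙ, and g = gₙ or g = −gₙ. -/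
open Polynomial


private lemma pell_deg_lc {K : Type*} [Field K] {d f g : Polynomial K}
    (hd : 0 < d.natDegree) (hg : g ≠ 0) (h : f ^ 2 - d * g ^ 2 = 1) :
    f ≠ 0 ∧ 2 * f.natDegree = d.natDegree + 2 * g.natDegree ∧
      f.leadingCoeff ^ 2 = d.leadingCoeff * g.leadingCoeff ^ 2 := by
  have hd0 : d ≠ 0 := fun hh => by simp [hh] at hd
  have hdg : d * g ^ 2 ≠ 0 := mul_ne_zero hd0 (pow_ne_zero _ hg)
  have hdgdeg : (d * g ^ 2).natDegree = d.natDegree + 2 * g.natDegree := by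
    rw [natDegree_mul hd0 (pow_ne_zero _ hg), natDegree_pow]
  have hpos : 0 < (d * g ^ 2).natDegree := by omega
  have h1 : (1 : Polynomial K).degree < (d * g ^ 2).degree := by
    rw [degree_one]
    exact natDegree_pos_iff_degree_pos.mp hpos
  have hf2 : f ^ 2 = 1 + d * g ^ 2 := by linear_combination h
  have hdeq : (f ^ 2).degree = (d * g ^ 2).degree := by
    rw [hf2, degree_add_eq_right_of_degree_lt h1]
  have hf0 : f ≠ 0 := by
    intro hf
    rw [hf] at hdeq
    have hb : (d * g ^ 2).degree = ⊥ := by rw [← hdeq]; simp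
    exact hdg (degree_eq_bot.mp hb)
  refine ⟨hf0, ?_, ?_⟩
  · have := natDegree_eq_of_degree_eq hdeq
    rwa [natDegree_pow, hdgdeg] at this
  · have : (f ^ 2).leadingCoeff = (d * g ^ 2).leadingCoeff := by
      rw [hf2, leadingCoeff_add_of_degree_lt h1]
    rwa [leadingCoeff_pow, leadingCoeff_mul, leadingCoeff_pow] at this

private lemma pell_descent_core' {K : Type*} [Field K] (h2 : (2 : K) ≠ 0)
    {d f₁ g₁ f g : Polynomial K}
    (hd : 0 < d.natDegree) (hg₁ : g₁ ≠ 0) (h₁ : f₁ ^ 2 - d * g₁ ^ 2 = 1)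
    (hg : g ≠ 0) (h : f ^ 2 - d * g ^ 2 = 1)
    (hn₁ : g₁.natDegree ≤ g.natDegree)
    (hlc : g.leadingCoeff * f₁.leadingCoeff = f.leadingCoeff * g₁.leadingCoeff) :
    g * f₁ - f * g₁ = 0 ∨ (g * f₁ - f * g₁).natDegree < g.natDegree := by
  obtain ⟨hf0, hdegf, _⟩ := pell_deg_lc hd hg h
  obtain ⟨hf₁0, hdegf₁, _⟩ := pell_deg_lc hd hg₁ h₁
  by_cases hz : g * f₁ - f * g₁ = 0
  · exact Or.inl hz
  right
  set N := g.natDegree + f₁.natDegree with hN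
  have hkey : g.natDegree + f₁.natDegree = f.natDegree + g₁.natDegree := by omega
  -- the conjugate factor has exact degree N with nonzero leading coefficient
  have hc1 : (g * f₁).coeff N = g.leadingCoeff * f₁.leadingCoeff := by
    rw [hN]; exact coeff_mul_degree_add_degree g f₁
  have hc2 : (f * g₁).coeff N = f.leadingCoeff * g₁.leadingCoeff := by
    rw [hN, hkey]; exact coeff_mul_degree_add_degree f g₁
  have hcoeff : (g * f₁ + f * g₁).coeff N ≠ 0 := by
    rw [coeff_add, hc1, hc2, ← hlc, ← two_mul]
    exact mul_ne_zero h2 (mul_ne_zero (leadingCoeff_ne_zero.mpr hg)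
      (leadingCoeff_ne_zero.mpr hf₁0))
  have hgpp0 : g * f₁ + f * g₁ ≠ 0 := fun hh => hcoeff (by simp [hh])
  have hle : N ≤ (g * f₁ + f * g₁).natDegree := le_natDegree_of_ne_zero hcoeff
  have hprod : (g * f₁ - f * g₁) * (g * f₁ + f * g₁) = g ^ 2 - g₁ ^ 2 := by
    linear_combination g ^ 2 * h₁ - g₁ ^ 2 * h
  have hprodle : (g ^ 2 - g₁ ^ 2).natDegree ≤ 2 * g.natDegree := by
    refine le_trans (natDegree_sub_le _ _) ?_
    simp only [natDegree_pow]
    omega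
  have hmul : (g * f₁ - f * g₁).natDegree + (g * f₁ + f * g₁).natDegree
      = (g ^ 2 - g₁ ^ 2).natDegree := by
    rw [← hprod, natDegree_mul hz hgpp0]
  have hm₁ : 1 ≤ f₁.natDegree := by omega
  omega

private lemma pell_descent {K : Type*} [Field K] (h2 : (2 : K) ≠ 0)
    {d f₁ g₁ f g : Polynomial K}
    (hd : 0 < d.natDegree) (hg₁ : g₁ ≠ 0) (h₁ : f₁ ^ 2 - d * g₁ ^ 2 = 1)
    (hg : g ≠ 0) (h : f ^ 2 - d * g ^ 2 = 1)
    (hn₁ : g₁.natDegree ≤ g.natDegree) :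
    ∃ f' g' : Polynomial K, f' ^ 2 - d * g' ^ 2 = 1 ∧
      (g' = 0 ∨ g'.natDegree < g.natDegree) ∧
      f = f₁ * f' + d * g₁ * g' ∧
      (g = f₁ * g' + g₁ * f' ∨ g = -(f₁ * g' + g₁ * f')) := by
  have construct : ∀ p : Polynomial K, p ^ 2 - d * g ^ 2 = 1 →
      g.leadingCoeff * f₁.leadingCoeff = p.leadingCoeff * g₁.leadingCoeff →
      ∃ f' g' : Polynomial K, f' ^ 2 - d * g' ^ 2 = 1 ∧
        (g' = 0 ∨ g'.natDegree < g.natDegree) ∧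
        p = f₁ * f' + d * g₁ * g' ∧ g = f₁ * g' + g₁ * f' := by
    intro p hp hlcp
    refine ⟨p * f₁ - d * g * g₁, g * f₁ - p * g₁, ?_,
      pell_descent_core' h2 hd hg₁ h₁ hg hp hn₁ hlcp, ?_, ?_⟩
    · linear_combination (f₁ ^ 2 - d * g₁ ^ 2) * hp + h₁
    · linear_combination (-p) * h₁
    · linear_combination (-g) * h₁
  obtain ⟨hf0, hdegf, hlcf⟩ := pell_deg_lc hd hg h
  obtain ⟨hf₁0, hdegf₁, hlcf₁⟩ := pell_deg_lc hd hg₁ h₁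
  have hsqeq : (g.leadingCoeff * f₁.leadingCoeff - f.leadingCoeff * g₁.leadingCoeff) *
      (g.leadingCoeff * f₁.leadingCoeff + f.leadingCoeff * g₁.leadingCoeff) = 0 := by
    linear_combination g.leadingCoeff ^ 2 * hlcf₁ - g₁.leadingCoeff ^ 2 * hlcf
  rcases mul_eq_zero.mp hsqeq with hcase | hcase
  · exact (construct f h (sub_eq_zero.mp hcase)).imp fun f' hh =>
      hh.imp fun g' ⟨h1, h2', h3, h4⟩ => ⟨h1, h2', h3, Or.inl h4⟩
  · have hneg : (-f) ^ 2 - d * g ^ 2 = 1 := by linear_combination h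
    have hlcneg : g.leadingCoeff * f₁.leadingCoeff = (-f).leadingCoeff * g₁.leadingCoeff := by
      rw [leadingCoeff_neg]
      linear_combination hcase
    obtain ⟨f₀, g₀, hn₀, hd₀, hf₀, hg₀⟩ := construct (-f) hneg hlcneg
    refine ⟨-f₀, -g₀, by linear_combination hn₀, ?_, by linear_combination -hf₀,
      Or.inr (by linear_combination hg₀)⟩
    rcases hd₀ with h0 | h0
    · exact Or.inl (by rw [h0, neg_zero])
    · exact Or.inr (by simpa [natDegree_neg] using h0)

private lemma pm_trans' {R : Type*} [Ring R] {a b c : R}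
    (h1 : a = b ∨ a = -b) (h2 : b = c ∨ b = -c) : a = c ∨ a = -c := by
  rcases h1 with h | h <;> rcases h2 with h' | h' <;> rw [h, h']
  · exact Or.inl rfl
  · exact Or.inr rfl
  · exact Or.inr rfl
  · exact Or.inl (neg_neg c)


theorem pell_solutions_generated_by_fundamental
    {K : Type*} [Field K] (hchar : (2 : K) ≠ 0)
    (d : Polynomial K) (hd : 0 < d.natDegree) (hsq : ¬ ∃ e : Polynomial K, d = e ^ 2)
    (f₁ g₁ : Polynomial K) (hg₁ : g₁ ≠ 0) (hpell : f₁ ^ 2 - d * g₁ ^ 2 = 1)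
    (hmin : ∀ f g : Polynomial K, g ≠ 0 → f ^ 2 - d * g ^ 2 = 1 → f₁.degree ≤ f.degree)
    (F G : ℕ → Polynomial K)
    (hF0 : F 0 = 1) (hG0 : G 0 = 0)
    (hF : ∀ n, F (n + 1) = f₁ * F n + d * g₁ * G n)
    (hG : ∀ n, G (n + 1) = f₁ * G n + g₁ * F n) :
    ∀ f g : Polynomial K, f ^ 2 - d * g ^ 2 = 1 →
      ∃ n : ℕ, (f = F n ∨ f = -F n) ∧ (g = G n ∨ g = -G n) := by
  -- base case: g = 0
  have base : ∀ f : Polynomial K, f ^ 2 - d * 0 ^ 2 = 1 →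
      ∃ n : ℕ, (f = F n ∨ f = -F n) ∧ ((0 : Polynomial K) = G n ∨ (0 : Polynomial K) = -G n) := by
    intro f h
    have hfact : (f - 1) * (f + 1) = 0 := by linear_combination h
    rcases mul_eq_zero.mp hfact with hf | hf
    · exact ⟨0, Or.inl (by rw [hF0]; linear_combination hf), Or.inl (by rw [hG0])⟩
    · exact ⟨0, Or.inr (by rw [hF0]; linear_combination hf), Or.inl (by rw [hG0])⟩
  have main : ∀ N : ℕ, ∀ f g : Polynomial K, f ^ 2 - d * g ^ 2 = 1 →
      (g = 0 ∨ g.natDegree < N) →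
      ∃ n : ℕ, (f = F n ∨ f = -F n) ∧ (g = G n ∨ g = -G n) := by
    intro N
    induction N with
    | zero =>
      intro f g h hc
      rcases hc with hc | hc
      · subst hc; exact base f h
      · omega
    | succ N ih =>
      intro f g h hc
      by_cases hg : g = 0
      · subst hg; exact base f h
      have hgN : g.natDegree ≤ N := by
        rcases hc with hc | hc
        · exact absurd hc hg
        · omega
      -- degree comparison from minimality
      obtain ⟨hf0, hdegf, _⟩ := pell_deg_lc hd hg h
      obtain ⟨hf₁0, hdegf₁, _⟩ := pell_deg_lc hd hg₁ hpell
      have hmle : f₁.natDegree ≤ f.natDegree :=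
        natDegree_le_natDegree (hmin f g hg h)
      have hn₁ : g₁.natDegree ≤ g.natDegree := by omega
      obtain ⟨f', g', hnorm, hdrop, hrecf, hrecg⟩ :=
        pell_descent hchar hd hg₁ hpell hg h hn₁
      obtain ⟨n, hfn, hgn⟩ := ih f' g' hnorm (by
        rcases hdrop with h0 | h0
        · exact Or.inl h0
        · exact Or.inr (by omega))
      -- now reconstruct
      rcases hfn with hf' | hf' <;> rcases hgn with hg' | hg'
      · -- f' = F n, g' = G n : index n+1
        refine ⟨n + 1, Or.inl ?_, pm_trans' hrecg (Or.inl ?_)⟩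
        · rw [hrecf, hf', hg', hF n]
        · rw [hf', hg', hG n]
      · -- f' = F n, g' = -G n
        rcases n with _ | m
        · -- n = 0 : g' = 0, index 1
          refine ⟨1, Or.inl ?_, pm_trans' hrecg (Or.inl ?_)⟩
          · rw [hrecf, hf', hg', hF 0, hF0, hG0]; ring
          · rw [hf', hg', hG 0, hF0, hG0]; ring
        · -- index m
          refine ⟨m, Or.inl ?_, pm_trans' hrecg (Or.inr ?_)⟩
          · rw [hrecf, hf', hg', hF m, hG m]; linear_combination (F m) * hpell
          · rw [hf', hg', hF m, hG m]; linear_combination (-(G m)) * hpell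
      · -- f' = -F n, g' = G n
        rcases n with _ | m
        · refine ⟨1, Or.inr ?_, pm_trans' hrecg (Or.inr ?_)⟩
          · rw [hrecf, hf', hg', hF 0, hF0, hG0]; ring
          · rw [hf', hg', hG 0, hF0, hG0]; ring
        · refine ⟨m, Or.inr ?_, pm_trans' hrecg (Or.inl ?_)⟩
          · rw [hrecf, hf', hg', hF m, hG m]; linear_combination (-(F m)) * hpell
          · rw [hf', hg', hF m, hG m]; linear_combination (G m) * hpell
      · -- f' = -F n, g' = -G n : index n+1, with signs flipped
        refine ⟨n + 1, Or.inr ?_, pm_trans' hrecg (Or.inr ?_)⟩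
        · rw [hrecf, hf', hg', hF n]; ring
        · rw [hf', hg', hG n]; ring
  intro f g h
  exact main (g.natDegree + 1) f g h (Or.inr (by omega))
end

section
/- Let d ∈ ℤ[X] be monic, quartic (degree 4) and squarefree. Suppose there exist f, g ∈ ℚ[X] with g ≠ 0 and f² − d·g² = 1 such that the leading coefficients of f and g are both integers. Then for every f', g' ∈ ℚ[X] with g' ≠ 0 and f'² − d·g'² = 1, the leading coefficients of f' and g' are integers. -/
open Polynomial

private lemma addAux {p q : Polynomial ℚ} {n : ℕ} (hp : p.natDegree ≤ n) (hq : q.natDegree ≤ n)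
    (h : p.coeff n + q.coeff n ≠ 0) :
    (p + q).natDegree = n ∧ (p + q).leadingCoeff = p.coeff n + q.coeff n ∧ p + q ≠ 0 := by
  have hc : (p + q).coeff n = p.coeff n + q.coeff n := coeff_add p q n
  have h1 : (p + q).natDegree = n := by
    refine le_antisymm ((natDegree_add_le p q).trans (max_le hp hq)) ?_
    exact le_natDegree_of_ne_zero (by rw [hc]; exact h)
  have h2 : (p + q).leadingCoeff = p.coeff n + q.coeff n := by
    rw [leadingCoeff, h1, hc]
  exact ⟨h1, h2, leadingCoeff_ne_zero.mp (by rw [h2]; exact h)⟩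

/-- Basic facts about a Pell solution. -/
private lemma solA {D : Polynomial ℚ} (hD : D.Monic) (hDdeg : D.natDegree = 4)
    {f g : Polynomial ℚ} (hg : g ≠ 0) (h : f ^ 2 - D * g ^ 2 = 1) :
    f ≠ 0 ∧ f.natDegree = g.natDegree + 2 ∧ f.leadingCoeff ^ 2 = g.leadingCoeff ^ 2 := by
  have hD0 : D ≠ 0 := hD.ne_zero
  have hf2 : f ^ 2 = 1 + D * g ^ 2 := by linear_combination h
  have hg2 : g ^ 2 ≠ 0 := pow_ne_zero _ hg
  have hdg : (D * g ^ 2).natDegree = 4 + 2 * g.natDegree := by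
    rw [natDegree_mul hD0 hg2, hDdeg, natDegree_pow]
  have hlcdg : (D * g ^ 2).coeff (4 + 2 * g.natDegree) = g.leadingCoeff ^ 2 := by
    have h1 : (D * g ^ 2).coeff (4 + 2 * g.natDegree) = (D * g ^ 2).leadingCoeff := by
      rw [leadingCoeff, hdg]
    rw [h1, leadingCoeff_mul, leadingCoeff_pow, hD.leadingCoeff, one_mul]
  have h1c : (1 : Polynomial ℚ).coeff (4 + 2 * g.natDegree) = 0 := by
    rw [coeff_one]; simp
  have hne : (1 : Polynomial ℚ).coeff (4 + 2 * g.natDegree)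
      + (D * g ^ 2).coeff (4 + 2 * g.natDegree) ≠ 0 := by
    rw [h1c, hlcdg, zero_add]
    exact pow_ne_zero _ (leadingCoeff_ne_zero.mpr hg)
  have haux := addAux (p := 1) (q := D * g ^ 2) (n := 4 + 2 * g.natDegree)
    (by simp) (le_of_eq hdg) hne
  have hdegf2 : (f ^ 2).natDegree = 4 + 2 * g.natDegree := by rw [hf2]; exact haux.1
  have hf0 : f ≠ 0 := by
    intro hf
    rw [hf, show ((0 : Polynomial ℚ)) ^ 2 = 0 from by ring, natDegree_zero] at hdegf2
    omega
  have hdf : f.natDegree = g.natDegree + 2 := by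
    have h2 := hdegf2
    rw [natDegree_pow] at h2
    omega
  refine ⟨hf0, hdf, ?_⟩
  have h3 : (f ^ 2).leadingCoeff = g.leadingCoeff ^ 2 := by
    rw [hf2, haux.2.1, h1c, hlcdg, zero_add]
  rw [leadingCoeff_pow] at h3
  exact h3

/-- The key structure result: every "positive type" solution has leading coefficient
`± 2^k a₀^(k+1)` where `a₀` is the leading coefficient of a minimal positive solution. -/
private lemma keyInduction (D : Polynomial ℚ) (hD : D.Monic) (hDdeg : D.natDegree = 4)
    (f₀ g₀ : Polynomial ℚ) (hg₀ : g₀ ≠ 0) (h₀ : f₀ ^ 2 - D * g₀ ^ 2 = 1)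
    (hpos₀ : g₀.leadingCoeff = f₀.leadingCoeff)
    (hmin : ∀ f g : Polynomial ℚ, g ≠ 0 → f ^ 2 - D * g ^ 2 = 1 →
      g.leadingCoeff = f.leadingCoeff → f₀.natDegree ≤ f.natDegree) :
    ∀ n : ℕ, ∀ f' g' : Polynomial ℚ, f'.natDegree = n → g' ≠ 0 →
      f' ^ 2 - D * g' ^ 2 = 1 → g'.leadingCoeff = f'.leadingCoeff →
      ∃ k : ℕ, f'.leadingCoeff = 2 ^ k * f₀.leadingCoeff ^ (k + 1) ∨
        f'.leadingCoeff = -(2 ^ k * f₀.leadingCoeff ^ (k + 1)) := by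
  intro n
  induction n using Nat.strong_induction_on with
  | _ n IH =>
  intro f' g' hn hg' h' hpos'
  obtain ⟨hf₀, hdf₀, _⟩ := solA hD hDdeg hg₀ h₀
  obtain ⟨hf', hdf', _⟩ := solA hD hDdeg hg' h'
  set a₀ := f₀.leadingCoeff with ha₀def
  set a' := f'.leadingCoeff with ha'def
  have ha₀ : a₀ ≠ 0 := leadingCoeff_ne_zero.mpr hf₀
  have ha' : a' ≠ 0 := leadingCoeff_ne_zero.mpr hf'
  have hD0 : D ≠ 0 := hD.ne_zero
  set n₀ := f₀.natDegree with hn₀def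
  set n' := f'.natDegree with hn'def
  have hkey : n₀ ≤ n' := hmin f' g' hg' h' hpos'
  set F : Polynomial ℚ := f' * f₀ - D * g' * g₀ with hFdef
  set G : Polynomial ℚ := f₀ * g' - f' * g₀ with hGdef
  have hFG : F ^ 2 - D * G ^ 2 = 1 := by
    rw [hFdef, hGdef]
    linear_combination (f₀ ^ 2 - D * g₀ ^ 2) * h' + h₀
  have hback_f : f' = F * f₀ + D * G * g₀ := by
    rw [hFdef, hGdef]; linear_combination (-f') * h₀
  -- the two product identities controlling degrees
  have hFid : F * (f' * f₀ + D * g' * g₀) = 1 + D * (g₀ ^ 2 + g' ^ 2) := by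
    rw [hFdef]; linear_combination (1 + D * g₀ ^ 2) * h' + f' ^ 2 * h₀
  have hGid : G * (f₀ * g' + f' * g₀) = g' ^ 2 - g₀ ^ 2 := by
    rw [hGdef]; linear_combination g' ^ 2 * h₀ + (- g₀ ^ 2) * h'
  -- degree and leading coefficient of A := f'*f₀ + D*g'*g₀
  have hdg₀ : g₀.natDegree = n₀ - 2 := by omega
  have hdg' : g'.natDegree = n' - 2 := by omega
  have hn₀2 : 2 ≤ n₀ := by omega
  have hn'2 : 2 ≤ n' := by omega
  have hdffp : (f' * f₀).natDegree = n' + n₀ := by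
    rw [natDegree_mul hf' hf₀]
  have hdDgg : (D * g' * g₀).natDegree = n' + n₀ := by
    rw [natDegree_mul (mul_ne_zero hD0 hg') hg₀, natDegree_mul hD0 hg', hDdeg]
    omega
  have hlcffp : (f' * f₀).coeff (n' + n₀) = a' * a₀ := by
    have h1 : (f' * f₀).coeff (n' + n₀) = (f' * f₀).leadingCoeff := by rw [leadingCoeff, hdffp]
    rw [h1, leadingCoeff_mul]
  have hlcDgg : (D * g' * g₀).coeff (n' + n₀) = a' * a₀ := by
    have h1 : (D * g' * g₀).coeff (n' + n₀) = (D * g' * g₀).leadingCoeff := by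
      rw [leadingCoeff, hdDgg]
    rw [h1, leadingCoeff_mul, leadingCoeff_mul, hD.leadingCoeff, one_mul, hpos', hpos₀]
  have haa : a' * a₀ + a' * a₀ ≠ 0 := by
    have hne : a' * a₀ ≠ 0 := mul_ne_zero ha' ha₀
    intro hcon
    apply hne
    linarith
  have hA := addAux (le_of_eq hdffp) (le_of_eq hdDgg)
    (by rw [hlcffp, hlcDgg]; exact haa)
  have hA0 : f' * f₀ + D * g' * g₀ ≠ 0 := hA.2.2
  by_cases hlt : n₀ < n'
  · -- inductive step
    have hdg'sq : (g' ^ 2).natDegree = 2 * n' - 4 := by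
      rw [natDegree_pow]; omega
    have hdg₀sq : (g₀ ^ 2).natDegree = 2 * n₀ - 4 := by
      rw [natDegree_pow]; omega
    have hb' : g'.leadingCoeff = a' := hpos'
    have hcz : (g₀ ^ 2).coeff (2 * n' - 4) = 0 :=
      coeff_eq_zero_of_natDegree_lt (by omega)
    have hcg' : (g' ^ 2).coeff (2 * n' - 4) = a' ^ 2 := by
      have h1 : (g' ^ 2).coeff (2 * n' - 4) = (g' ^ 2).leadingCoeff := by
        rw [leadingCoeff, hdg'sq]
      rw [h1, leadingCoeff_pow, hb']
    have hsum := addAux (p := g₀ ^ 2) (q := g' ^ 2) (n := 2 * n' - 4)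
      (by omega) (le_of_eq hdg'sq)
      (by rw [hcz, hcg', zero_add]; exact pow_ne_zero _ ha')
    have hlcsum : (g₀ ^ 2 + g' ^ 2).leadingCoeff = a' ^ 2 := by
      rw [hsum.2.1, hcz, hcg', zero_add]
    have hdDsum : (D * (g₀ ^ 2 + g' ^ 2)).natDegree = 2 * n' := by
      rw [natDegree_mul hD0 hsum.2.2, hDdeg, hsum.1]; omega
    have hlcDsum : (D * (g₀ ^ 2 + g' ^ 2)).coeff (2 * n') = a' ^ 2 := by
      have h1 : (D * (g₀ ^ 2 + g' ^ 2)).coeff (2 * n') = (D * (g₀ ^ 2 + g' ^ 2)).leadingCoeff := by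
        rw [leadingCoeff, hdDsum]
      rw [h1, leadingCoeff_mul, hD.leadingCoeff, one_mul, hlcsum]
    have hB := addAux (p := (1 : Polynomial ℚ)) (q := D * (g₀ ^ 2 + g' ^ 2)) (n := 2 * n')
      (by simp) (le_of_eq hdDsum)
      (by rw [coeff_one, if_neg (by omega : ¬ (2 * n' = 0)), hlcDsum, zero_add]
          exact pow_ne_zero _ ha')
    have hlcB : (1 + D * (g₀ ^ 2 + g' ^ 2)).leadingCoeff = a' ^ 2 := by
      rw [hB.2.1, coeff_one, if_neg (by omega : ¬ (2 * n' = 0)), hlcDsum, zero_add]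
    -- F is nonzero with degree n' - n₀ and leading coeff a' / (2 a₀)
    have hF0 : F ≠ 0 := by
      intro hcon
      rw [hcon, zero_mul] at hFid
      exact hB.2.2 hFid.symm
    have hdF : F.natDegree = n' - n₀ := by
      have h1 : (F * (f' * f₀ + D * g' * g₀)).natDegree = 2 * n' := by rw [hFid, hB.1]
      rw [natDegree_mul hF0 hA0, hA.1] at h1
      omega
    have hlcF : F.leadingCoeff * (a' * a₀ + a' * a₀) = a' ^ 2 := by
      have h1 : (F * (f' * f₀ + D * g' * g₀)).leadingCoeff = a' ^ 2 := by rw [hFid, hlcB]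
      rw [leadingCoeff_mul, hA.2.1, hlcffp, hlcDgg] at h1
      exact h1
    -- G is nonzero
    have hG0 : G ≠ 0 := by
      intro hcon
      rw [hcon, zero_mul] at hGid
      have h1 : g' ^ 2 = g₀ ^ 2 := by linear_combination -hGid
      have hdeq : (g' ^ 2).natDegree = (g₀ ^ 2).natDegree := by rw [h1]
      rw [hdg'sq, hdg₀sq] at hdeq
      omega
    -- C := f₀ * g' + f' * g₀ is nonzero with degree n₀+n'-2, lc 2a₀a'
    have hdfg1 : (f₀ * g').natDegree = n₀ + n' - 2 := by
      rw [natDegree_mul hf₀ hg']; omega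
    have hdfg2 : (f' * g₀).natDegree = n₀ + n' - 2 := by
      rw [natDegree_mul hf' hg₀]; omega
    have hlcfg1 : (f₀ * g').coeff (n₀ + n' - 2) = a₀ * a' := by
      have h1 : (f₀ * g').coeff (n₀ + n' - 2) = (f₀ * g').leadingCoeff := by
        rw [leadingCoeff, hdfg1]
      rw [h1, leadingCoeff_mul, hb']
    have hlcfg2 : (f' * g₀).coeff (n₀ + n' - 2) = a₀ * a' := by
      have h1 : (f' * g₀).coeff (n₀ + n' - 2) = (f' * g₀).leadingCoeff := by
        rw [leadingCoeff, hdfg2]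
      rw [h1, leadingCoeff_mul, hpos₀]
      ring
    have haa' : a₀ * a' + a₀ * a' ≠ 0 := by
      have hne : a₀ * a' ≠ 0 := mul_ne_zero ha₀ ha'
      intro hcon; apply hne; linarith
    have hC := addAux (le_of_eq hdfg1) (le_of_eq hdfg2)
      (by rw [hlcfg1, hlcfg2]; exact haa')
    -- RHS of hGid: g'^2 - g₀^2, degree 2n'-4, lc a'^2
    have hczn : (-(g₀ ^ 2)).coeff (2 * n' - 4) = 0 := by
      rw [coeff_neg, coeff_eq_zero_of_natDegree_lt (by omega), neg_zero]
    have hRHS := addAux (p := g' ^ 2) (q := -(g₀ ^ 2)) (n := 2 * n' - 4)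
      (le_of_eq hdg'sq) (by rw [natDegree_neg]; omega)
      (by rw [hczn, hcg', add_zero]; exact pow_ne_zero _ ha')
    have hsub : g' ^ 2 - g₀ ^ 2 = g' ^ 2 + -(g₀ ^ 2) := by ring
    have hdG : G.natDegree = n' - n₀ - 2 := by
      have h1 : (G * (f₀ * g' + f' * g₀)).natDegree = 2 * n' - 4 := by
        rw [hGid, hsub, hRHS.1]
      rw [natDegree_mul hG0 hC.2.2, hC.1] at h1
      omega
    have hlcG : G.leadingCoeff * (a₀ * a' + a₀ * a') = a' ^ 2 := by
      have h1 : (G * (f₀ * g' + f' * g₀)).leadingCoeff = a' ^ 2 := by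
        rw [hGid, hsub, hRHS.2.1, hczn, hcg', add_zero]
      rw [leadingCoeff_mul, hC.2.1, hlcfg1, hlcfg2] at h1
      exact h1
    -- (F, G) is a positive solution
    have hposFG : G.leadingCoeff = F.leadingCoeff := by
      have h2 : G.leadingCoeff * (a' * a₀ + a' * a₀) = F.leadingCoeff * (a' * a₀ + a' * a₀) := by
        linear_combination hlcG - hlcF
      exact mul_right_cancel₀ haa h2
    -- apply IH
    have hdFlt : F.natDegree < n := by omega
    obtain ⟨k, hk⟩ := IH F.natDegree hdFlt F G rfl hG0 hFG hposFG
    refine ⟨k + 1, ?_⟩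
    have ha'eq : a' = F.leadingCoeff * (2 * a₀) := by
      have h1 := hlcF
      have h2 : F.leadingCoeff * (a' * a₀ + a' * a₀) = (F.leadingCoeff * (2 * a₀)) * a' := by
        ring
      rw [h2, sq] at h1
      exact (mul_right_cancel₀ ha' h1).symm
    rcases hk with hk | hk
    · left
      rw [ha'eq, hk]; ring
    · right
      rw [ha'eq, hk]; ring
  · -- base case : n' = n₀
    have hn'eq : n' = n₀ := by omega
    have hG0 : G = 0 := by
      by_contra hG0
      obtain ⟨hF0, hdFG, _⟩ := solA hD hDdeg hG0 hFG
      have hdg'sq : (g' ^ 2).natDegree = 2 * n₀ - 4 := by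
        rw [natDegree_pow]; omega
      have hdg₀sq : (g₀ ^ 2).natDegree = 2 * n₀ - 4 := by
        rw [natDegree_pow]; omega
      have hcoe' : (g' ^ 2).coeff (2 * n₀ - 4) = a' ^ 2 := by
        have h1 : (g' ^ 2).coeff (2 * n₀ - 4) = (g' ^ 2).leadingCoeff := by
          rw [leadingCoeff, hdg'sq]
        rw [h1, leadingCoeff_pow, hpos']
      have hcoe₀ : (g₀ ^ 2).coeff (2 * n₀ - 4) = a₀ ^ 2 := by
        have h1 : (g₀ ^ 2).coeff (2 * n₀ - 4) = (g₀ ^ 2).leadingCoeff := by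
          rw [leadingCoeff, hdg₀sq]
        rw [h1, leadingCoeff_pow, hpos₀]
      have hposs : a₀ ^ 2 + a' ^ 2 ≠ 0 := by
        intro hcon
        have h1 : 0 < a₀ ^ 2 := pow_two_pos_of_ne_zero ha₀
        have h2 : 0 ≤ a' ^ 2 := sq_nonneg a'
        linarith
      have hsum := addAux (p := g₀ ^ 2) (q := g' ^ 2) (n := 2 * n₀ - 4)
        (le_of_eq hdg₀sq) (le_of_eq hdg'sq) (by rw [hcoe₀, hcoe']; exact hposs)
      have hdDsum : (D * (g₀ ^ 2 + g' ^ 2)).natDegree = 2 * n₀ := by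
        rw [natDegree_mul hD0 hsum.2.2, hDdeg, hsum.1]; omega
      have hcoeDsum : (D * (g₀ ^ 2 + g' ^ 2)).coeff (2 * n₀) = a₀ ^ 2 + a' ^ 2 := by
        have h1 : (D * (g₀ ^ 2 + g' ^ 2)).coeff (2 * n₀)
            = (D * (g₀ ^ 2 + g' ^ 2)).leadingCoeff := by
          rw [leadingCoeff, hdDsum]
        rw [h1, leadingCoeff_mul, hD.leadingCoeff, one_mul, hsum.2.1, hcoe₀, hcoe']
      have hB := addAux (p := (1 : Polynomial ℚ)) (q := D * (g₀ ^ 2 + g' ^ 2)) (n := 2 * n₀)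
        (by simp) (le_of_eq hdDsum)
        (by rw [coeff_one, if_neg (by omega : ¬ (2 * n₀ = 0)), hcoeDsum, zero_add]; exact hposs)
      have h1 : (F * (f' * f₀ + D * g' * g₀)).natDegree = 2 * n₀ := by
        rw [hFid, hB.1]
      rw [natDegree_mul hF0 hA0, hA.1, hn'eq] at h1
      omega
    have hF1 : F ^ 2 = 1 := by
      have h1 := hFG
      rw [hG0] at h1
      linear_combination h1
    have hF : F = 1 ∨ F = -1 := by
      have h2 : (F - 1) * (F + 1) = 0 := by linear_combination hF1
      rcases mul_eq_zero.mp h2 with h | h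
      · left; linear_combination h
      · right; linear_combination h
    refine ⟨0, ?_⟩
    have hf'eq : f' = F * f₀ := by
      rw [hback_f, hG0]; ring
    rcases hF with h | h
    · left
      rw [ha'def, hf'eq, h, one_mul]
      simp [ha₀def]
    · right
      rw [ha'def, hf'eq, h]
      rw [neg_one_mul, leadingCoeff_neg]
      simp [ha₀def]

/-- If some power-form value has denominator 1, then a₀ is an integer. -/
private lemma a0_int {a₀ c : ℚ} (hc : c.den = 1) (m : ℕ)
    (h : c = 2 ^ m * a₀ ^ (m + 1) ∨ c = -(2 ^ m * a₀ ^ (m + 1))) :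
    ∃ v : ℤ, a₀ = (v : ℚ) := by
  obtain ⟨z, hz⟩ : ∃ z : ℤ, c = (z : ℚ) := ⟨c.num, ((Rat.den_eq_one_iff c).mp hc).symm⟩
  have hq : (2 * a₀) ^ (m + 1) = ((2 * z : ℤ) : ℚ) ∨ (2 * a₀) ^ (m + 1) = ((-(2 * z) : ℤ) : ℚ) := by
    rcases h with h | h
    · left; rw [hz] at h; rw [mul_pow]; push_cast at h ⊢; linear_combination (-2) * h
    · right; rw [hz] at h; rw [mul_pow]; push_cast at h ⊢; linear_combination 2 * h
  set q : ℚ := 2 * a₀ with hqdef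
  have hden : q.den = 1 := by
    have hpden : (q ^ (m + 1)).den = 1 := by
      rcases hq with h | h <;> rw [h] <;> exact Rat.den_intCast _
    have h2 : (q ^ (m + 1)).den = q.den ^ (m + 1) := rfl
    rw [h2] at hpden
    by_contra hne
    have hpos : 0 < q.den := q.den_pos
    have h2le : 2 ≤ q.den := by omega
    have h3 : 2 ^ (m + 1) ≤ q.den ^ (m + 1) := Nat.pow_le_pow_left h2le _
    have h4 : 2 ≤ 2 ^ (m + 1) := Nat.le_self_pow (by omega) 2
    omega
  obtain ⟨u, hu⟩ : ∃ u : ℤ, q = (u : ℚ) := ⟨q.num, ((Rat.den_eq_one_iff q).mp hden).symm⟩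
  have h2u : (2 : ℤ) ∣ u := by
    have hpow' : u ^ (m + 1) = 2 * z ∨ u ^ (m + 1) = -(2 * z) := by
      rcases hq with h | h
      · left; rw [hu] at h; exact_mod_cast h
      · right; rw [hu] at h; exact_mod_cast h
    have h2 : (2 : ℤ) ∣ u ^ (m + 1) := by
      rcases hpow' with h | h <;> rw [h]
      · exact ⟨z, rfl⟩
      · exact ⟨-z, by ring⟩
    exact Int.Prime.dvd_pow' Nat.prime_two h2
  obtain ⟨v, hv⟩ := h2u
  refine ⟨v, ?_⟩
  have h3 : (2 : ℚ) * a₀ = 2 * (v : ℚ) := by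
    rw [← hqdef, hu, hv]; push_cast; ring
  linarith

theorem all_solutions_integral_leading_coeff
    (d : Polynomial ℤ) (hmonic : d.Monic) (hdeg : d.natDegree = 4) (hsf : Squarefree d)
    (f g : Polynomial ℚ) (hg : g ≠ 0)
    (hpell : f ^ 2 - (d.map (Int.castRingHom ℚ)) * g ^ 2 = 1)
    (hf_int : f.leadingCoeff.den = 1) (hg_int : g.leadingCoeff.den = 1) :
    ∀ f' g' : Polynomial ℚ, g' ≠ 0 →
      f' ^ 2 - (d.map (Int.castRingHom ℚ)) * g' ^ 2 = 1 →
      f'.leadingCoeff.den = 1 ∧ g'.leadingCoeff.den = 1 := by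
  set D : Polynomial ℚ := d.map (Int.castRingHom ℚ) with hDdef
  have hD : D.Monic := hmonic.map _
  have hDdeg : D.natDegree = 4 := by
    rw [hDdef, hmonic.natDegree_map, hdeg]
  -- normalize a solution to a positive-type one
  have hposify : ∀ f' g' : Polynomial ℚ, g' ≠ 0 → f' ^ 2 - D * g' ^ 2 = 1 →
      ∃ g'' : Polynomial ℚ, g'' ≠ 0 ∧ f' ^ 2 - D * g'' ^ 2 = 1 ∧
        g''.leadingCoeff = f'.leadingCoeff ∧ g''.leadingCoeff ^ 2 = g'.leadingCoeff ^ 2 := by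
    intro f' g' hg' h'
    obtain ⟨hf', hdf', hlc'⟩ := solA hD hDdeg hg' h'
    have hz : (f'.leadingCoeff - g'.leadingCoeff) * (f'.leadingCoeff + g'.leadingCoeff) = 0 := by
      linear_combination hlc'
    rcases mul_eq_zero.mp hz with h | h
    · exact ⟨g', hg', h', by linarith, rfl⟩
    · refine ⟨-g', neg_ne_zero.mpr hg', by linear_combination h', ?_, by rw [leadingCoeff_neg]; ring⟩
      rw [leadingCoeff_neg]; linarith
  -- the set of degrees of positive solutions is nonempty
  have hSne : ∃ n : ℕ, ∃ f' g' : Polynomial ℚ, g' ≠ 0 ∧ f' ^ 2 - D * g' ^ 2 = 1 ∧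
      g'.leadingCoeff = f'.leadingCoeff ∧ f'.natDegree = n := by
    obtain ⟨g'', hg'', h'', hpos'', _⟩ := hposify f g hg hpell
    exact ⟨f.natDegree, f, g'', hg'', h'', hpos'', rfl⟩
  classical
  obtain ⟨f₀, g₀, hg₀, h₀, hpos₀, hdeg₀⟩ := Nat.find_spec hSne
  have hmin : ∀ f' g' : Polynomial ℚ, g' ≠ 0 → f' ^ 2 - D * g' ^ 2 = 1 →
      g'.leadingCoeff = f'.leadingCoeff → f₀.natDegree ≤ f'.natDegree := by
    intro f' g' hg' h' hpos'
    rw [hdeg₀]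
    exact Nat.find_min' hSne ⟨f', g', hg', h', hpos', rfl⟩
  have hkey := keyInduction D hD hDdeg f₀ g₀ hg₀ h₀ hpos₀ hmin
  -- a₀ is an integer
  obtain ⟨g'', hg'', h'', hpos'', hsq''⟩ := hposify f g hg hpell
  obtain ⟨m, hm⟩ := hkey f.natDegree f g'' rfl hg'' h'' hpos''
  obtain ⟨v, hv⟩ := a0_int hf_int m hm
  -- conclude for arbitrary solutions
  intro f' g' hg' h'
  obtain ⟨g₂, hg₂, h₂, hpos₂, hsq₂⟩ := hposify f' g' hg' h'
  obtain ⟨k, hk⟩ := hkey f'.natDegree f' g₂ rfl hg₂ h₂ hpos₂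
  have hfden : f'.leadingCoeff.den = 1 := by
    rcases hk with hk | hk
    · rw [hk, hv]
      rw [show (2 : ℚ) ^ k * ((v : ℚ)) ^ (k + 1) = ((2 ^ k * v ^ (k + 1) : ℤ) : ℚ) by push_cast; ring]
      exact Rat.den_intCast _
    · rw [hk, hv]
      rw [show -((2 : ℚ) ^ k * ((v : ℚ)) ^ (k + 1)) = ((-(2 ^ k * v ^ (k + 1)) : ℤ) : ℚ) by
        push_cast; ring]
      exact Rat.den_intCast _
  refine ⟨hfden, ?_⟩
  have hz2 : (g'.leadingCoeff - f'.leadingCoeff) * (g'.leadingCoeff + f'.leadingCoeff) = 0 := by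
    linear_combination -hsq₂ + (g₂.leadingCoeff + f'.leadingCoeff) * hpos₂
  rcases mul_eq_zero.mp hz2 with h | h
  · have he : g'.leadingCoeff = f'.leadingCoeff := by linarith
    rw [he]; exact hfden
  · have he : g'.leadingCoeff = -f'.leadingCoeff := by linarith
    rw [he]
    rw [show -f'.leadingCoeff = ((-f'.leadingCoeff.num : ℤ) : ℚ) by
      push_cast [(Rat.den_eq_one_iff _).mp hfden]; ring]
    exact Rat.den_intCast _
end

section
/- Let d ∈ ℤ[X] be monic, quartic (degree 4) and squarefree, and suppose d is Pellian over ℤ[X], i.e. there exist f, g ∈ ℤ[X] with g ≠ 0 and f² − d·g² = 1. Let a₃ ∈ ℤ be the coefficient of X³ in d and let d_c(X) = d(X − a₃/4) ∈ ℚ[X]. If f₁, g₁ ∈ ℚ[X] satisfy f₁² − d_c·g₁² = 1 with g₁ ≠ 0 and f₁ has minimal degree among all such nontrivial solutions (for all f, g ∈ ℚ[X] with g ≠ 0 and f² − d_c·g² = 1, deg f₁ ≤ deg f), then the leading coefficient of f₁ is an integer. -/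
open Polynomial

private lemma sq_cases_rat {x y : ℚ} (h : x ^ 2 = y ^ 2) : y = x ∨ y = -x := by
  have h2 : (y - x) * (y + x) = 0 := by linear_combination -h
  rcases mul_eq_zero.mp h2 with h3 | h3
  · left; linarith
  · right; linarith

private lemma pell_basic (D : Polynomial ℚ) (hD : D.Monic) (hDdeg : D.natDegree = 4)
    (F G : Polynomial ℚ) (hG : G ≠ 0) (h : F ^ 2 - D * G ^ 2 = 1) :
    F ≠ 0 ∧ F.natDegree = G.natDegree + 2 ∧
      F.leadingCoeff ^ 2 = G.leadingCoeff ^ 2 := by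
  have hDne : D ≠ 0 := hD.ne_zero
  have hG2 : G ^ 2 ≠ 0 := pow_ne_zero 2 hG
  have hDG : D * G ^ 2 ≠ 0 := mul_ne_zero hDne hG2
  have hdegDG : (D * G ^ 2).natDegree = 4 + 2 * G.natDegree := by
    rw [natDegree_mul hDne hG2, natDegree_pow, hDdeg]
  have hF2 : F ^ 2 = 1 + D * G ^ 2 := by linear_combination h
  have hdlt : (1 : Polynomial ℚ).degree < (D * G ^ 2).degree := by
    rw [degree_one, degree_eq_natDegree hDG]
    have hpos : 0 < (D * G ^ 2).natDegree := by omega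
    exact_mod_cast hpos
  have hFne : F ≠ 0 := by
    intro h0
    rw [h0] at hF2
    have h1 : D * G ^ 2 = -1 := by linear_combination -hF2
    have h2 : ((-1 : Polynomial ℚ)).natDegree = 0 := by simp
    rw [h1] at hdegDG
    omega
  have hdeg : (F ^ 2).degree = (D * G ^ 2).degree := by
    rw [hF2, degree_add_eq_right_of_degree_lt hdlt]
  have hndeg : (F ^ 2).natDegree = (D * G ^ 2).natDegree := natDegree_eq_of_degree_eq hdeg
  rw [natDegree_pow] at hndeg
  have hlc : F.leadingCoeff ^ 2 = G.leadingCoeff ^ 2 := by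
    have h1 : (F ^ 2).leadingCoeff = (D * G ^ 2).leadingCoeff := by
      rw [hF2, leadingCoeff_add_of_degree_lt hdlt]
    rw [leadingCoeff_pow, leadingCoeff_mul, leadingCoeff_pow, hD.leadingCoeff, one_mul] at h1
    exact h1
  exact ⟨hFne, by omega, hlc⟩

private lemma pell_base (D f₁ g₁ F G : Polynomial ℚ) (s : ℚ) (hs : s = 1 ∨ s = -1)
    (hg₁ : g₁ ≠ 0) (h : F ^ 2 - D * G ^ 2 = 1) (hp1 : f₁ ^ 2 - D * g₁ ^ 2 = 1)
    (h0 : G * f₁ + C s * (F * g₁) = 0) :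
    F.leadingCoeff = f₁.leadingCoeff ∨ F.leadingCoeff = -f₁.leadingCoeff := by
  have hs2 : s * s = 1 := by rcases hs with h' | h' <;> rw [h'] <;> norm_num
  have hSS : (C s : Polynomial ℚ) * C s = 1 := by rw [← C_mul, hs2, C_1]
  have hGf : G * f₁ = -(C s) * (F * g₁) := by linear_combination h0
  have hsq : G ^ 2 * f₁ ^ 2 = F ^ 2 * g₁ ^ 2 := by
    have h2 : (G * f₁) ^ 2 = (-(C s) * (F * g₁)) ^ 2 := by rw [hGf]
    linear_combination h2 + F ^ 2 * g₁ ^ 2 * hSS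
  have hGg : G ^ 2 = g₁ ^ 2 := by
    linear_combination -G ^ 2 * hp1 + g₁ ^ 2 * h + hsq
  have hGcase : (G - g₁) * (G + g₁) = 0 := by linear_combination hGg
  rcases mul_eq_zero.mp hGcase with hc | hc
  · -- G = g₁
    have hGeq : G = g₁ := by linear_combination hc
    rw [hGeq] at hGf
    have hx : g₁ * (f₁ + C s * F) = 0 := by linear_combination hGf
    have hy : f₁ + C s * F = 0 := (mul_eq_zero.mp hx).resolve_left hg₁
    have hFeq : F = -(C s * f₁) := by linear_combination C s * hy - F * hSS
    have hlc : F.leadingCoeff = -(s * f₁.leadingCoeff) := by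
      rw [hFeq, leadingCoeff_neg, leadingCoeff_mul, leadingCoeff_C]
    rcases hs with h' | h'
    · right; rw [hlc, h']; ring
    · left; rw [hlc, h']; ring
  · -- G = -g₁
    have hGeq : G = -g₁ := by linear_combination hc
    rw [hGeq] at hGf
    have hx : g₁ * (C s * F - f₁) = 0 := by linear_combination hGf
    have hy : C s * F - f₁ = 0 := (mul_eq_zero.mp hx).resolve_left hg₁
    have hFeq : F = C s * f₁ := by linear_combination C s * hy - F * hSS
    have hlc : F.leadingCoeff = s * f₁.leadingCoeff := by
      rw [hFeq, leadingCoeff_mul, leadingCoeff_C]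
    rcases hs with h' | h'
    · left; rw [hlc, h']; ring
    · right; rw [hlc, h']; ring

private lemma pell_descent_s8 (D : Polynomial ℚ) (hD : D.Monic) (hDdeg : D.natDegree = 4)
    (f₁ g₁ : Polynomial ℚ) (hg₁ : g₁ ≠ 0) (hp1 : f₁ ^ 2 - D * g₁ ^ 2 = 1)
    (hmin : ∀ f g : Polynomial ℚ, g ≠ 0 → f ^ 2 - D * g ^ 2 = 1 → f₁.degree ≤ f.degree) :
    ∀ N : ℕ, ∀ F G : Polynomial ℚ, F.natDegree ≤ N → G ≠ 0 → F ^ 2 - D * G ^ 2 = 1 →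
      ∃ n : ℕ, F.leadingCoeff = 2 ^ n * f₁.leadingCoeff ^ (n + 1) ∨
        F.leadingCoeff = -(2 ^ n * f₁.leadingCoeff ^ (n + 1)) := by
  intro N
  induction N with
  | zero =>
    intro F G hFN hG h
    obtain ⟨_, hdeg, _⟩ := pell_basic D hD hDdeg F G hG h
    exfalso; omega
  | succ N ih =>
    intro F G hFN hG h
    obtain ⟨hFne, hFdeg, hFlc⟩ := pell_basic D hD hDdeg F G hG h
    obtain ⟨hf₁ne, hf₁deg, hf₁lc⟩ := pell_basic D hD hDdeg f₁ g₁ hg₁ hp1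
    have hane : F.leadingCoeff ≠ 0 := leadingCoeff_ne_zero.mpr hFne
    have hbne : G.leadingCoeff ≠ 0 := leadingCoeff_ne_zero.mpr hG
    have hcne : f₁.leadingCoeff ≠ 0 := leadingCoeff_ne_zero.mpr hf₁ne
    have hcgne : g₁.leadingCoeff ≠ 0 := leadingCoeff_ne_zero.mpr hg₁
    have hkm : g₁.natDegree ≤ G.natDegree := by
      have h1 := natDegree_le_natDegree (hmin F G hG h)
      omega
    -- choose the sign s
    have hsex : ∃ s : ℚ, (s = 1 ∨ s = -1) ∧
        G.leadingCoeff * f₁.leadingCoeff + s * (F.leadingCoeff * g₁.leadingCoeff) = 0 := by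
      have h2 : (G.leadingCoeff * f₁.leadingCoeff - F.leadingCoeff * g₁.leadingCoeff) *
          (G.leadingCoeff * f₁.leadingCoeff + F.leadingCoeff * g₁.leadingCoeff) = 0 := by
        linear_combination -f₁.leadingCoeff ^ 2 * hFlc + F.leadingCoeff ^ 2 * hf₁lc
      rcases mul_eq_zero.mp h2 with h3 | h3
      · exact ⟨-1, Or.inr rfl, by linarith⟩
      · exact ⟨1, Or.inl rfl, by linarith⟩
    obtain ⟨s, hs, hcanc⟩ := hsex
    have hs2 : s * s = 1 := by rcases hs with h' | h' <;> rw [h'] <;> norm_num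
    have hSS : (C s : Polynomial ℚ) * C s = 1 := by rw [← C_mul, hs2, C_1]
    set G' : Polynomial ℚ := G * f₁ + C s * (F * g₁) with hG'def
    set F' : Polynomial ℚ := F * f₁ + C s * (D * (G * g₁)) with hF'def
    set G'' : Polynomial ℚ := G * f₁ - C s * (F * g₁) with hG''def
    clear_value G' F' G''
    by_cases hG'0 : G' = 0
    · -- base case
      have := pell_base D f₁ g₁ F G s hs hg₁ h hp1 (by rw [← hG'def]; exact hG'0)
      refine ⟨0, ?_⟩
      rcases this with h' | h'
      · left; rw [h']; ring
      · right; rw [h']; ring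
    by_cases hG''0 : G'' = 0
    · -- base case with -s
      have hs' : -s = 1 ∨ -s = -1 := by rcases hs with h' | h' <;> rw [h'] <;> norm_num
      have h0' : G * f₁ + C (-s) * (F * g₁) = 0 := by
        rw [map_neg]
        have : G'' = G * f₁ - C s * (F * g₁) := hG''def
        linear_combination hG''0 - this
      have := pell_base D f₁ g₁ F G (-s) hs' hg₁ h hp1 h0'
      refine ⟨0, ?_⟩
      rcases this with h' | h'
      · left; rw [h']; ring
      · right; rw [h']; ring
    -- descent case
    have hP' : F' ^ 2 - D * G' ^ 2 = 1 := by
      rw [hF'def, hG'def]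
      linear_combination (f₁ ^ 2 - D * g₁ ^ 2) * h + hp1 +
        (D ^ 2 * G ^ 2 * g₁ ^ 2 - D * F ^ 2 * g₁ ^ 2) * hSS
    have hprod : G' * G'' = G ^ 2 - g₁ ^ 2 := by
      rw [hG'def, hG''def]
      linear_combination G ^ 2 * hp1 - g₁ ^ 2 * h - F ^ 2 * g₁ ^ 2 * hSS
    -- natDegree of G''
    set M : ℕ := G.natDegree + g₁.natDegree + 2 with hM
    have hcoefGf : (G * f₁).coeff M = G.leadingCoeff * f₁.leadingCoeff := by
      rw [show M = G.natDegree + f₁.natDegree by omega]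
      exact coeff_mul_degree_add_degree G f₁
    have hcoefFg : (F * g₁).coeff M = F.leadingCoeff * g₁.leadingCoeff := by
      rw [show M = F.natDegree + g₁.natDegree by omega]
      exact coeff_mul_degree_add_degree F g₁
    have hcoefG'' : G''.coeff M = 2 * (G.leadingCoeff * f₁.leadingCoeff) := by
      rw [hG''def, coeff_sub, coeff_C_mul, hcoefGf, hcoefFg]
      linear_combination -hcanc
    have hcoefG''ne : G''.coeff M ≠ 0 := by
      rw [hcoefG'']
      exact mul_ne_zero two_ne_zero (mul_ne_zero hbne hcne)
    have hG''le : G''.natDegree ≤ M := by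
      rw [hG''def]
      refine le_trans (natDegree_sub_le _ _) (max_le ?_ ?_)
      · exact le_trans (natDegree_mul_le) (by omega)
      · refine le_trans (natDegree_mul_le) ?_
        have h1 : (C s : Polynomial ℚ).natDegree = 0 := natDegree_C s
        have h2 : (F * g₁).natDegree ≤ F.natDegree + g₁.natDegree := natDegree_mul_le
        omega
    have hG''deg : G''.natDegree = M :=
      le_antisymm hG''le (le_natDegree_of_ne_zero hcoefG''ne)
    -- bound on natDegree of G'
    have hG'le : G'.natDegree + g₁.natDegree + 2 ≤ G.natDegree := by
      have h1 : (G' * G'').natDegree = G'.natDegree + M := by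
        rw [natDegree_mul hG'0 hG''0, hG''deg]
      have h2 : (G ^ 2 - g₁ ^ 2).natDegree ≤ 2 * G.natDegree := by
        refine le_trans (natDegree_sub_le _ _) (max_le ?_ ?_)
        · rw [natDegree_pow]
        · rw [natDegree_pow]; omega
      rw [hprod] at h1
      omega
    obtain ⟨hF'ne, hF'deg, hF'lc⟩ := pell_basic D hD hDdeg F' G' hG'0 hP'
    have hG'lcne : G'.leadingCoeff ≠ 0 := leadingCoeff_ne_zero.mpr hG'0
    have hF'lcne : F'.leadingCoeff ≠ 0 := leadingCoeff_ne_zero.mpr hF'ne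
    -- recursive call
    have hF'N : F'.natDegree ≤ N := by omega
    obtain ⟨n, hn⟩ := ih F' G' hF'N hG'0 hP'
    -- reconstruct F
    have hFrec : F = F' * f₁ - C s * (D * (G' * g₁)) := by
      rw [hF'def, hG'def]
      linear_combination -F * hp1 + D * F * g₁ ^ 2 * hSS
    set N₀ : ℕ := G'.natDegree + g₁.natDegree + 4 with hN₀
    have hc1 : (F' * f₁).coeff N₀ = F'.leadingCoeff * f₁.leadingCoeff := by
      rw [show N₀ = F'.natDegree + f₁.natDegree by omega]
      exact coeff_mul_degree_add_degree F' f₁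
    have hGg₁ne : G' * g₁ ≠ 0 := mul_ne_zero hG'0 hg₁
    have hc2 : (D * (G' * g₁)).coeff N₀ = G'.leadingCoeff * g₁.leadingCoeff := by
      rw [show N₀ = D.natDegree + (G' * g₁).natDegree by
        rw [natDegree_mul hG'0 hg₁, hDdeg]; omega]
      rw [coeff_mul_degree_add_degree D (G' * g₁), hD.leadingCoeff, one_mul, leadingCoeff_mul]
    have hcF : F.coeff N₀ = F'.leadingCoeff * f₁.leadingCoeff -
        s * (G'.leadingCoeff * g₁.leadingCoeff) := by
      rw [hFrec, coeff_sub, coeff_C_mul, hc1, hc2]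
    have hFle : F.natDegree ≤ N₀ := by
      rw [hFrec]
      refine le_trans (natDegree_sub_le _ _) (max_le ?_ ?_)
      · exact le_trans (natDegree_mul_le) (by omega)
      · refine le_trans (natDegree_mul_le) ?_
        have h1 : (C s : Polynomial ℚ).natDegree = 0 := natDegree_C s
        have h2 : (D * (G' * g₁)).natDegree ≤ D.natDegree + (G' * g₁).natDegree :=
          natDegree_mul_le
        have h3 : (G' * g₁).natDegree = G'.natDegree + g₁.natDegree :=
          natDegree_mul hG'0 hg₁
        omega
    have hN₀eq : F.natDegree = N₀ := by omega
    have haeq : F.leadingCoeff = F'.leadingCoeff * f₁.leadingCoeff -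
        s * (G'.leadingCoeff * g₁.leadingCoeff) := by
      rw [← hcF, ← hN₀eq]
      rfl
    have hGF' : G'.leadingCoeff = F'.leadingCoeff ∨ G'.leadingCoeff = -F'.leadingCoeff :=
      sq_cases_rat hF'lc
    have hcgc : g₁.leadingCoeff = f₁.leadingCoeff ∨ g₁.leadingCoeff = -f₁.leadingCoeff :=
      sq_cases_rat hf₁lc
    have key2 : F.leadingCoeff = 2 * f₁.leadingCoeff * F'.leadingCoeff := by
      rcases hs with h1 | h1 <;> rcases hcgc with h2 | h2 <;> rcases hGF' with h3 | h3 <;>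
        rw [h1, h2, h3] at haeq <;>
        first
          | (exfalso; apply hane; rw [haeq]; ring1)
          | (rw [haeq]; ring1)
    refine ⟨n + 1, ?_⟩
    rcases hn with h5 | h5
    · left; rw [key2, h5]; ring
    · right; rw [key2, h5]; ring

private lemma den_eq_one (c : ℚ) (z : ℤ) (n : ℕ)
    (h : (z : ℚ) = 2 ^ n * c ^ (n + 1) ∨ (z : ℚ) = -(2 ^ n * c ^ (n + 1))) :
    c.den = 1 := by
  have hden0 : ((c.den : ℚ)) ≠ 0 := by
    exact_mod_cast c.den_ne_zero
  have hcd : c * (c.den : ℚ) = (c.num : ℚ) :=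
    ((div_eq_iff hden0).mp (Rat.num_div_den c)).symm
  obtain ⟨w, hw⟩ : ∃ w : ℤ, (w : ℚ) = 2 ^ n * c ^ (n + 1) := by
    rcases h with h | h
    · exact ⟨z, h⟩
    · exact ⟨-z, by push_cast; linarith⟩
  have hZ : w * (c.den : ℤ) ^ (n + 1) = 2 ^ n * c.num ^ (n + 1) := by
    have hq : (w : ℚ) * (c.den : ℚ) ^ (n + 1) = 2 ^ n * (c.num : ℚ) ^ (n + 1) := by
      rw [hw, ← hcd]; ring
    exact_mod_cast hq
  have hdvd : ((c.den : ℤ)) ^ (n + 1) ∣ 2 ^ n * c.num ^ (n + 1) :=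
    ⟨w, by linear_combination -hZ⟩
  have hco : IsCoprime ((c.den : ℤ)) (c.num) := by
    rw [Int.isCoprime_iff_gcd_eq_one, Int.gcd]
    simp only [Int.natAbs_natCast]
    rw [Nat.gcd_comm]
    exact c.reduced
  have hdvd2 : ((c.den : ℤ)) ^ (n + 1) ∣ 2 ^ n :=
    (IsCoprime.pow hco).dvd_of_dvd_mul_right hdvd
  by_contra hne
  have h2 : 2 ≤ c.den := by
    have := c.pos
    omega
  have h3 : ((c.den : ℤ)) ^ (n + 1) ≤ 2 ^ n := Int.le_of_dvd (by positivity) hdvd2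
  have h4 : (2 : ℤ) ^ (n + 1) ≤ ((c.den : ℤ)) ^ (n + 1) :=
    pow_le_pow_left₀ (by norm_num) (by exact_mod_cast h2) (n + 1)
  have h5 : (2 : ℤ) ^ n < 2 ^ (n + 1) := by
    have hpos : (0 : ℤ) < 2 ^ n := pow_pos (by norm_num) n
    calc (2 : ℤ) ^ n < 2 ^ n + 2 ^ n := by linarith
    _ = 2 ^ (n + 1) := by ring
  linarith

theorem minimal_solution_integral_leading_coeff
    (d : Polynomial ℤ) (hmonic : d.Monic) (hdeg : d.natDegree = 4) (hsf : Squarefree d)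
    (hpellian : ∃ f g : Polynomial ℤ, g ≠ 0 ∧ f ^ 2 - d * g ^ 2 = 1)
    (d_c : Polynomial ℚ)
    (hd_c : d_c = (d.map (Int.castRingHom ℚ)).comp (X - C ((d.coeff 3 : ℚ) / 4)))
    (f₁ g₁ : Polynomial ℚ) (hg₁ : g₁ ≠ 0) (hpell : f₁ ^ 2 - d_c * g₁ ^ 2 = 1)
    (hmin : ∀ f g : Polynomial ℚ, g ≠ 0 → f ^ 2 - d_c * g ^ 2 = 1 →
      f₁.degree ≤ f.degree) :
    f₁.leadingCoeff.den = 1 := by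
  obtain ⟨f, g, hgne, hfg⟩ := hpellian
  have hinj : Function.Injective (Int.castRingHom ℚ) := Int.cast_injective
  have hmapdeg : (d.map (Int.castRingHom ℚ)).natDegree = 4 := by
    rw [natDegree_map_eq_of_injective hinj, hdeg]
  have hDmonic : d_c.Monic := by
    rw [hd_c]; exact (hmonic.map _).comp_X_sub_C _
  have hDdeg : d_c.natDegree = 4 := by
    rw [hd_c, natDegree_comp, natDegree_X_sub_C, hmapdeg]
  set r : ℚ := (d.coeff 3 : ℚ) / 4 with hr
  set F₀ : Polynomial ℚ := (f.map (Int.castRingHom ℚ)).comp (X - C r) with hF₀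
  set G₀ : Polynomial ℚ := (g.map (Int.castRingHom ℚ)).comp (X - C r) with hG₀
  have hqdeg : (X - C r : Polynomial ℚ).natDegree ≠ 0 := by
    rw [natDegree_X_sub_C]; norm_num
  have hgmapne : g.map (Int.castRingHom ℚ) ≠ 0 := (Polynomial.map_ne_zero_iff hinj).mpr hgne
  have hG₀lc : G₀.leadingCoeff = (g.map (Int.castRingHom ℚ)).leadingCoeff := by
    rw [hG₀, leadingCoeff_comp hqdeg, (monic_X_sub_C r).leadingCoeff, one_pow, mul_one]
  have hG₀ne : G₀ ≠ 0 := by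
    intro h0
    apply leadingCoeff_ne_zero.mpr hgmapne
    rw [← hG₀lc, h0, leadingCoeff_zero]
  have hpell₀ : F₀ ^ 2 - d_c * G₀ ^ 2 = 1 := by
    rw [hF₀, hG₀, hd_c]
    have heq : ((f.map (Int.castRingHom ℚ)).comp (X - C r)) ^ 2 -
        (d.map (Int.castRingHom ℚ)).comp (X - C r) *
          ((g.map (Int.castRingHom ℚ)).comp (X - C r)) ^ 2 =
        ((f ^ 2 - d * g ^ 2).map (Int.castRingHom ℚ)).comp (X - C r) := by
      simp [Polynomial.map_sub, Polynomial.map_mul, Polynomial.map_pow,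
        sub_comp, mul_comp, pow_comp]
    rw [heq, hfg]
    simp
  obtain ⟨n, hn⟩ := pell_descent_s8 d_c hDmonic hDdeg f₁ g₁ hg₁ hpell hmin
    F₀.natDegree F₀ G₀ le_rfl hG₀ne hpell₀
  have hF₀lc : F₀.leadingCoeff = ((f.leadingCoeff : ℚ)) := by
    rw [hF₀, leadingCoeff_comp hqdeg, (monic_X_sub_C r).leadingCoeff, one_pow, mul_one,
      leadingCoeff_map_of_injective hinj]
    rfl
  rw [hF₀lc] at hn
  exact den_eq_one f₁.leadingCoeff f.leadingCoeff n hn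
end

section
/- Let p, q ∈ ℤ[X] be nonzero polynomials with deg p > deg q and q(0) = 0. Let a ∈ ℚ, written in lowest terms as a = r/s with r ∈ ℤ, s ∈ ℕ, gcd(r, s) = 1. Suppose q(a) ≠ 0 and p(a)/q(a) ∈ ℤ, i.e. there exists k ∈ ℤ with p(a) = k·q(a) in ℚ. Then s divides the leading coefficient of p and r divides the constant coefficient p(0). -/
open Polynomial

theorem rational_value_divisibility
    (p q : Polynomial ℤ) (hp : p ≠ 0) (hq : q ≠ 0)
    (hdeg : q.degree < p.degree) (hq0 : q.eval 0 = 0)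
    (a : ℚ) (hqa : aeval a q ≠ 0)
    (hint : ∃ k : ℤ, aeval a p = (k : ℚ) * aeval a q) :
    (a.den : ℤ) ∣ p.leadingCoeff ∧ a.num ∣ p.coeff 0 := by
  obtain ⟨k, hk⟩ := hint
  set f : Polynomial ℤ := p - C k * q with hf
  have hdeg' : (C k * q).degree < p.degree := by
    rcases eq_or_ne k 0 with h | h
    · simpa [h] using lt_of_le_of_lt bot_le hdeg
    · rwa [degree_C_mul h]
  have hroot : aeval a f = 0 := by
    simp [hf, hk, map_sub, map_mul]
  have hlead : f.leadingCoeff = p.leadingCoeff :=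
    leadingCoeff_sub_of_degree_lt hdeg'
  have hconst : f.coeff 0 = p.coeff 0 := by
    have : q.coeff 0 = 0 := by rwa [coeff_zero_eq_eval_zero]
    simp [hf, this]
  -- rational root theorem with IsFractionRing num/den
  set n : ℤ := IsFractionRing.num ℤ a
  set d : ℤ := (IsFractionRing.den ℤ a : ℤ)
  have hnd : (n : ℚ) / (d : ℚ) = a := by
    simpa using IsFractionRing.mk'_num_den' ℤ a
  have hd0 : d ≠ 0 :=
    nonZeroDivisors.coe_ne_zero _
  have hcross : n * (a.den : ℤ) = a.num * d := by
    have : (n : ℚ) = a * d := by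
      field_simp at hnd
      linarith [hnd]
    have h2 : (n : ℚ) * (a.den : ℚ) = (a.num : ℚ) * (d : ℚ) := by
      rw [this]
      rw [mul_comm a (d:ℚ), mul_assoc, Rat.mul_den_eq_num]; ring
    exact_mod_cast h2
  have hnum_dvd : a.num ∣ n := by
    have h1 : a.num ∣ n * (a.den : ℤ) := hcross ▸ Dvd.intro d rfl
    exact (IsCoprime.dvd_of_dvd_mul_right
      (Int.isCoprime_iff_gcd_eq_one.mpr (by exact a.reduced)) h1)
  have hden_dvd : (a.den : ℤ) ∣ d := by
    have h1 : (a.den : ℤ) ∣ a.num * d := hcross ▸ Dvd.intro_left n rfl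
    exact (IsCoprime.dvd_of_dvd_mul_left
      (Int.isCoprime_iff_gcd_eq_one.mpr (by rw [Int.gcd_comm]; exact a.reduced)) h1)
  refine ⟨?_, ?_⟩
  · calc (a.den : ℤ) ∣ d := hden_dvd
      _ ∣ f.leadingCoeff := den_dvd_of_is_root hroot
      _ = p.leadingCoeff := hlead
  · calc a.num ∣ n := hnum_dvd
      _ ∣ f.coeff 0 := num_dvd_of_is_root hroot
      _ = p.coeff 0 := hconst
end

section
/- Let q ∈ ℚ and n ≥ 1 a natural number. If 2^{n−1}·qⁿ is an integer, then q is an integer. -/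
theorem integral_power_implies_integral (q : ℚ) (n : ℕ) (hn : 1 ≤ n)
    (h : ((2 : ℚ) ^ (n - 1) * q ^ n).den = 1) : q.den = 1 := by
  set r : ℚ := (2 : ℚ) ^ (n - 1) * q ^ n with hr
  have hrint : ((r.num : ℚ)) = r := by
    rw [← Rat.num_div_den r, h]; simp
  have hq : (q.num : ℚ) / (q.den : ℚ) = q := Rat.num_div_den q
  have hden : ((q.den : ℚ)) ≠ 0 := by exact_mod_cast q.den_ne_zero
  have hqd : (q : ℚ) * (q.den : ℚ) = (q.num : ℚ) := by
    nth_rewrite 1 [← hq]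
    rw [div_mul_cancel₀ _ hden]
  have key : (r.num : ℚ) * (q.den : ℚ) ^ n = 2 ^ (n - 1) * (q.num : ℚ) ^ n := by
    rw [hrint, hr, mul_assoc, ← mul_pow, hqd]
  have keyZ : r.num * (q.den : ℤ) ^ n = 2 ^ (n - 1) * (q.num) ^ n := by
    exact_mod_cast key
  have hdvd : ((q.den : ℤ)) ^ n ∣ 2 ^ (n - 1) * q.num ^ n := ⟨r.num, by linarith [keyZ]⟩
  have hcop : IsCoprime ((q.den : ℤ) ^ n) (q.num ^ n) := by
    apply IsCoprime.pow
    rw [Int.isCoprime_iff_gcd_eq_one, Int.gcd_comm]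
    exact_mod_cast q.reduced
  have hdvd2 : ((q.den : ℤ)) ^ n ∣ 2 ^ (n - 1) := hcop.dvd_of_dvd_mul_right hdvd
  have hdvdN : q.den ^ n ∣ 2 ^ (n - 1) := by exact_mod_cast hdvd2
  have hd1 : q.den ∣ 2 ^ (n - 1) := dvd_trans (dvd_pow_self q.den (by omega)) hdvdN
  obtain ⟨j, hj, hjeq⟩ := (Nat.dvd_prime_pow Nat.prime_two).mp hd1
  rw [hjeq] at hdvdN ⊢
  have : (2 : ℕ) ^ (j * n) ∣ 2 ^ (n - 1) := by rwa [← pow_mul] at hdvdN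
  have hle : j * n ≤ n - 1 := (Nat.pow_dvd_pow_iff_le_right (by norm_num)).mp this
  have : j = 0 := by
    by_contra hj0
    have : n ≤ j * n := Nat.le_mul_of_pos_left n (Nat.pos_of_ne_zero hj0)
    omega
  simp [this]
end

section
/- For s ∈ ℤ, the polynomial X² + s is Pellian over ℤ[X] (i.e., there exist f, g ∈ ℤ[X] with g ≠ 0 and f² − (X² + s)·g² = 1) if and only if s ∈ {1, −1, 2, −2}. -/
open Polynomial

-- binomial step identity
lemma pell_choose_step (k j : ℕ) :
    (k+1)*(k+2)*Nat.choose (k+j+2) j = (j+1)*(k+j+2)*Nat.choose (k+j+1) (j+1) := by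
  have h1 : Nat.choose (k+j+2) j * j.factorial * (k+2).factorial = (k+j+2).factorial := by
    have := Nat.choose_mul_factorial_mul_factorial (show j ≤ k+j+2 by omega)
    simpa [show k+j+2-j = k+2 by omega] using this
  have h2 : Nat.choose (k+j+1) (j+1) * (j+1).factorial * k.factorial = (k+j+1).factorial := by
    have := Nat.choose_mul_factorial_mul_factorial (show j+1 ≤ k+j+1 by omega)
    simpa [show k+j+1-(j+1) = k by omega] using this
  apply Nat.eq_of_mul_eq_mul_right (Nat.mul_pos j.factorial_pos k.factorial_pos)
  have e1 : (k+2).factorial = (k+2)*((k+1)*k.factorial) := by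
    rw [show k+2 = (k+1)+1 from rfl, Nat.factorial_succ, Nat.factorial_succ]
  have e2 : (k+j+2).factorial = (k+j+2) * (k+j+1).factorial := by
    rw [show k+j+2 = (k+j+1)+1 from rfl, Nat.factorial_succ]
  have e3 : (j+1).factorial = (j+1) * j.factorial := Nat.factorial_succ j
  calc (k+1)*(k+2)*Nat.choose (k+j+2) j * (j.factorial * k.factorial)
      = Nat.choose (k+j+2) j * j.factorial * ((k+2)*((k+1)*k.factorial)) := by ring
    _ = Nat.choose (k+j+2) j * j.factorial * (k+2).factorial := by rw [e1]
    _ = (k+j+2).factorial := h1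
    _ = (k+j+2) * (k+j+1).factorial := e2
    _ = (k+j+2) * (Nat.choose (k+j+1) (j+1) * (j+1).factorial * k.factorial) := by rw [h2]
    _ = (j+1)*(k+j+2)*Nat.choose (k+j+1) (j+1) * (j.factorial * k.factorial) := by
        rw [e3]; ring

lemma pell_forward (s : ℤ) (f g : ℤ[X]) (hg : g ≠ 0)
    (h : f ^ 2 - (X ^ 2 + C s) * g ^ 2 = 1) :
    s = 1 ∨ s = -1 ∨ s = 2 ∨ s = -2 := by
  set φ : ℤ →+* ℚ := Int.castRingHom ℚ with hφ
  set F : ℚ[X] := f.map φ with hF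
  set G : ℚ[X] := g.map φ with hGdef
  have hG : G ≠ 0 := by
    rw [hGdef, Ne, Polynomial.map_eq_zero_iff (by exact Int.cast_injective)]
    exact hg
  have hQ : F ^ 2 - (X ^ 2 + C (s:ℚ)) * G ^ 2 = 1 := by
    have := congrArg (Polynomial.map φ) h
    simpa [Polynomial.map_sub, Polynomial.map_mul, Polynomial.map_pow,
      Polynomial.map_add, Polynomial.map_one, map_C] using this
  set m := g.natDegree with hm
  have hGdeg : G.natDegree = m := natDegree_map_eq_of_injective (by exact Int.cast_injective) g
  set D : ℚ[X] := X ^ 2 + C (s:ℚ) with hD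
  have hDmonic : D.Monic := monic_X_pow_add_C (s:ℚ) (by norm_num)
  have hDne : D ≠ 0 := hDmonic.ne_zero
  have hD2 : D.natDegree = 2 := natDegree_X_pow_add_C
  have hQ' : F ^ 2 = 1 + D * G ^ 2 := by linear_combination hQ
  have hDG : (D * G ^ 2).natDegree = 2 + 2 * m := by
    rw [natDegree_mul hDne (pow_ne_zero 2 hG), hD2, natDegree_pow, hGdeg]
  have hdegF : F.natDegree = m + 1 := by
    have h1 : (F ^ 2).natDegree = (1 + D * G ^ 2).natDegree := by rw [hQ']
    rw [natDegree_pow, natDegree_add_eq_right_of_natDegree_lt (by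
      rw [hDG, natDegree_one]; omega), hDG] at h1
    omega
  have hFne : F ≠ 0 := by
    intro h0
    rw [h0, natDegree_zero] at hdegF
    omega
  -- derivative of the Pell equation
  have key : F * derivative F = G * (X * G + D * derivative G) := by
    have hd := congrArg derivative hQ'
    rw [derivative_pow, derivative_add, derivative_one, derivative_mul,
      derivative_pow, hD, derivative_add, derivative_C, derivative_X_pow] at hd
    push_cast at hd
    rw [show (C (2:ℚ)) = 2 from map_ofNat _ 2] at hd
    apply mul_left_cancel₀ (show (2 : ℚ[X]) ≠ 0 by norm_num)
    linear_combination hd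
  -- coprimality and F' = c G
  have cop : IsCoprime G F := ⟨-(D * G), F, by linear_combination hQ⟩
  have hdvd : G ∣ derivative F :=
    cop.dvd_of_dvd_mul_left ⟨X * G + D * derivative G, key⟩
  obtain ⟨Hc, hH⟩ := hdvd
  have hF'ne : derivative F ≠ 0 := by
    intro h0
    have h1 : (derivative F).coeff m = F.coeff (m+1) * ((m:ℚ)+1) := by
      rw [coeff_derivative]
    rw [h0, coeff_zero] at h1
    have h2 : F.coeff (m+1) ≠ 0 := by
      rw [← hdegF] at *; exact leadingCoeff_ne_zero.mpr hFne
    have : ((m:ℚ)+1) ≠ 0 := by positivity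
    exact h2 ((mul_eq_zero.mp h1.symm).resolve_right this)
  have hHne : Hc ≠ 0 := by rintro rfl; rw [mul_zero] at hH; exact hF'ne hH
  have hHdeg : Hc.natDegree = 0 := by
    have h1 : (derivative F).natDegree ≤ m := by
      have := natDegree_derivative_le F
      omega
    rw [hH, natDegree_mul hG hHne, hGdeg] at h1
    omega
  set c : ℚ := Hc.coeff 0 with hcdef
  have hHC : Hc = C c := eq_C_of_natDegree_eq_zero hHdeg
  have hcne : c ≠ 0 := by rintro h0; rw [h0, map_zero] at hHC; exact hHne hHC
  have hdF : derivative F = C c * G := by rw [hH, hHC]; ring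
  have E6 : C c * F = X * G + D * derivative G := by
    apply mul_left_cancel₀ hG
    calc G * (C c * F) = F * derivative F := by rw [hdF]; ring
      _ = G * (X * G + D * derivative G) := key
  have E7 : C (c^2) * G = G + 3 * (X * derivative G)
      + X * (X * derivative (derivative G)) + C (s:ℚ) * derivative (derivative G) := by
    have hd2 := congrArg derivative E6
    rw [derivative_mul, derivative_C, derivative_add, derivative_mul, derivative_mul,
      derivative_X, hdF, hD, derivative_add, derivative_C, derivative_X_pow] at hd2
    push_cast at hd2
    rw [show (C (2:ℚ)) = 2 from map_ofNat _ 2] at hd2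
    rw [show C (c^2) = C c * C c from by rw [map_pow]; ring]
    linear_combination hd2
  have E7' : C (c^2) * G = G + C (3:ℚ) * (X^1 * derivative G)
      + X^2 * derivative (derivative G) + C (s:ℚ) * derivative (derivative G) := by
    rw [show C (3:ℚ) = (3:ℚ[X]) from map_ofNat _ 3]
    rw [show X^1 * derivative G = X * derivative G from by ring,
      show X^2 * derivative (derivative G) = X * (X * derivative (derivative G)) from by ring]
    exact E7
  have R : ∀ k : ℕ, (c^2 - ((k:ℚ)+1)^2) * G.coeff k
      = (s:ℚ) * ((k:ℚ)+1) * ((k:ℚ)+2) * G.coeff (k+2) := by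
    intro k
    have hco := congrArg (fun p => p.coeff k) E7'
    simp only [coeff_add, coeff_C_mul, coeff_X_pow_mul', coeff_derivative] at hco
    rcases k with _|_|j
    · simp only [show ¬ ((1:ℕ) ≤ 0) by omega, show ¬ ((2:ℕ) ≤ 0) by omega, if_neg,
        if_false, not_false_iff] at hco
      push_cast at hco ⊢
      linear_combination hco
    · simp only [show ((1:ℕ) ≤ 1) by omega, show ¬ ((2:ℕ) ≤ 1) by omega, if_true, if_false,
        ite_true, ite_false, if_neg, not_false_iff, if_pos] at hco
      norm_num at hco
      push_cast at hco ⊢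
      linear_combination hco
    · simp only [show ((1:ℕ) ≤ j+2) by omega, show ((2:ℕ) ≤ j+2) by omega, if_true, ite_true,
        if_pos, Nat.add_sub_cancel, show j+2-1 = j+1 by omega] at hco
      push_cast at hco ⊢
      linear_combination hco
  have ham : G.coeff m ≠ 0 := by
    rw [← hGdeg]; exact leadingCoeff_ne_zero.mpr hG
  have htop : ∀ k, m < k → G.coeff k = 0 := by
    intro k hk
    exact coeff_eq_zero_of_natDegree_lt (by omega : G.natDegree < k)
  have hc2 : c^2 = ((m:ℚ)+1)^2 := by
    have h1 := R m
    rw [htop (m+2) (by omega), mul_zero] at h1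
    have := mul_eq_zero.mp h1
    rcases this with h|h
    · linarith [sub_eq_zero.mp h]
    · exact absurd h ham
  -- parity: coefficients of index of opposite parity to m vanish
  have par : ∀ t : ℕ, ∀ k, k + 2*t = m + 1 → G.coeff k = 0 := by
    intro t
    induction t with
    | zero => intro k hk; exact htop k (by omega)
    | succ t ih =>
      intro k hk
      have h2 : G.coeff (k+2) = 0 := ih (k+2) (by omega)
      have h1 := R k
      rw [h2, mul_zero, hc2] at h1
      have hne : ((m:ℚ)+1)^2 - ((k:ℚ)+1)^2 ≠ 0 := by
        have hk1 : (k:ℚ) < (m:ℚ) := by exact_mod_cast (by omega : k < m)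
        have hk0 : (0:ℚ) ≤ (k:ℚ) := by positivity
        nlinarith
      exact (mul_eq_zero.mp h1).resolve_left hne
  -- closed form
  have CF : ∀ j k : ℕ, k + 2*j = m →
      (4:ℚ)^j * G.coeff k = (s:ℚ)^j * (Nat.choose (k+j) j : ℚ) * G.coeff m := by
    intro j
    induction j with
    | zero => intro k hk; simp [show k = m by omega]
    | succ j ih =>
      intro k hk
      have h2 := ih (k+2) (by omega)
      have hr := R k
      rw [hc2] at hr
      have hmc : (m:ℚ) = (k:ℚ) + 2*(j:ℚ) + 2 := by exact_mod_cast (by omega : m = k + 2*j + 2)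
      have cs : (((k:ℚ)+1)*((k:ℚ)+2)*(Nat.choose (k+j+2) j : ℚ))
          = ((j:ℚ)+1)*((k:ℚ)+(j:ℚ)+2)*(Nat.choose (k+j+1) (j+1) : ℚ) := by
        exact_mod_cast congrArg (fun n : ℕ => (n:ℚ)) (pell_choose_step k j)
      have hmul : (4*((j:ℚ)+1)*((k:ℚ)+(j:ℚ)+2)) * ((4:ℚ)^(j+1) * G.coeff k)
          = (4*((j:ℚ)+1)*((k:ℚ)+(j:ℚ)+2)) * ((s:ℚ)^(j+1) * (Nat.choose (k+(j+1)) (j+1) : ℚ) * G.coeff m) := by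
        have h2' : (4:ℚ)^j * G.coeff (k+2)
            = (s:ℚ)^j * (Nat.choose (k+2+j) j : ℚ) * G.coeff m := h2
        rw [show k+2+j = k+j+2 by omega] at h2'
        rw [show k+(j+1) = k+j+1 by omega]
        rw [hmc] at hr
        calc (4*((j:ℚ)+1)*((k:ℚ)+(j:ℚ)+2)) * ((4:ℚ)^(j+1) * G.coeff k)
            = (4:ℚ)^(j+1) * ((((k:ℚ)+2*(j:ℚ)+2)+1)^2 - ((k:ℚ)+1)^2) * G.coeff k := by ring
          _ = (4:ℚ)^(j+1) * ((s:ℚ) * ((k:ℚ)+1) * ((k:ℚ)+2) * G.coeff (k+2)) := by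
              rw [← hr]; ring
          _ = 4 * (s:ℚ) * ((k:ℚ)+1) * ((k:ℚ)+2) * ((4:ℚ)^j * G.coeff (k+2)) := by ring
          _ = 4 * (s:ℚ) * ((k:ℚ)+1) * ((k:ℚ)+2) * ((s:ℚ)^j * (Nat.choose (k+j+2) j : ℚ) * G.coeff m) := by
              rw [h2']
          _ = 4 * (s:ℚ)^(j+1) * G.coeff m * (((k:ℚ)+1)*((k:ℚ)+2)*(Nat.choose (k+j+2) j : ℚ)) := by
              ring
          _ = 4 * (s:ℚ)^(j+1) * G.coeff m * (((j:ℚ)+1)*((k:ℚ)+(j:ℚ)+2)*(Nat.choose (k+j+1) (j+1) : ℚ)) := by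
              rw [cs]
          _ = (4*((j:ℚ)+1)*((k:ℚ)+(j:ℚ)+2)) * ((s:ℚ)^(j+1) * (Nat.choose (k+j+1) (j+1) : ℚ) * G.coeff m) := by
              ring
      have hne : (4*((j:ℚ)+1)*((k:ℚ)+(j:ℚ)+2)) ≠ 0 := by positivity
      exact mul_left_cancel₀ hne hmul
  -- bottom coefficient relations
  have E0 : F.coeff 0 ^ 2 - (s:ℚ) * G.coeff 0 ^ 2 = 1 := by
    have hev := congrArg (eval 0) hQ
    simp only [hD, eval_sub, eval_mul, eval_pow, eval_add, eval_X, eval_C, eval_one] at hev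
    rw [coeff_zero_eq_eval_zero, coeff_zero_eq_eval_zero]
    linear_combination hev
  have E6' : C c * F = X^1 * G + X^2 * derivative G + C (s:ℚ) * derivative G := by
    rw [hD] at E6
    linear_combination E6
  have E1 : c * F.coeff 0 = (s:ℚ) * G.coeff 1 := by
    have hco := congrArg (fun p => p.coeff 0) E6'
    simp only [coeff_add, coeff_C_mul, coeff_X_pow_mul', coeff_derivative,
      show ¬ ((1:ℕ) ≤ 0) by omega, show ¬ ((2:ℕ) ≤ 0) by omega, if_neg, if_false,
      not_false_iff] at hco
    push_cast at hco
    linear_combination hco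
  have hg0 : G.coeff 0 = ((g.coeff 0 : ℤ) : ℚ) := coeff_map φ 0
  have hgm : G.coeff m = ((g.coeff m : ℤ) : ℚ) := coeff_map φ m
  rcases Nat.even_or_odd m with he|ho
  · -- m even : s = -1
    obtain ⟨t, ht⟩ := he
    have h1 : G.coeff 1 = 0 := par t 1 (by omega)
    have hf0 : F.coeff 0 = 0 := by
      have := E1
      rw [h1, mul_zero] at this
      exact (mul_eq_zero.mp this).resolve_left hcne
    rw [hf0] at E0
    rw [hg0] at E0
    have hz : s * (g.coeff 0)^2 = -1 := by exact_mod_cast (by linarith : (s:ℚ) * ((g.coeff 0 : ℤ):ℚ)^2 = -1)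
    have hdvd1 : (g.coeff 0)^2 ∣ 1 := ⟨-s, by linear_combination hz⟩
    have h2 := Int.isUnit_iff.mp (isUnit_of_dvd_one hdvd1)
    have h3 : (g.coeff 0)^2 = 1 := h2.resolve_right (by intro hq; nlinarith [sq_nonneg (g.coeff 0)])
    rw [h3] at hz
    omega
  · -- m odd
    obtain ⟨t, ht⟩ := ho
    have h0 : G.coeff 0 = 0 := par (t+1) 0 (by omega)
    have hf0 : F.coeff 0 ^ 2 = 1 := by rw [h0] at E0; linear_combination E0
    have hcf := CF t 1 (by omega)
    rw [show 1+t = t+1 by omega, Nat.choose_succ_self_right] at hcf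
    push_cast at hcf
    -- square relations
    have hB : ((m:ℚ)+1)^2 = (s:ℚ)^2 * (G.coeff 1)^2 := by
      have : (c * F.coeff 0)^2 = ((s:ℚ) * G.coeff 1)^2 := by rw [E1]
      calc ((m:ℚ)+1)^2 = c^2 * (F.coeff 0 ^ 2) := by rw [hc2, hf0]; ring
        _ = (c * F.coeff 0)^2 := by ring
        _ = ((s:ℚ) * G.coeff 1)^2 := this
        _ = (s:ℚ)^2 * (G.coeff 1)^2 := by ring
    have hA : (4:ℚ)^(2*t) * (G.coeff 1)^2 = (s:ℚ)^(2*t) * ((t:ℚ)+1)^2 * (G.coeff m)^2 := by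
      have : ((4:ℚ)^t * G.coeff 1)^2 = ((s:ℚ)^t * ((t:ℚ)+1) * G.coeff m)^2 := by rw [hcf]
      calc (4:ℚ)^(2*t) * (G.coeff 1)^2 = ((4:ℚ)^t * G.coeff 1)^2 := by ring
        _ = ((s:ℚ)^t * ((t:ℚ)+1) * G.coeff m)^2 := this
        _ = (s:ℚ)^(2*t) * ((t:ℚ)+1)^2 * (G.coeff m)^2 := by ring
    have hmQ : (m:ℚ) = 2*(t:ℚ)+1 := by exact_mod_cast (by omega : m = 2*t+1)
    have h5 : (s:ℚ)^(2*t+2) * (G.coeff m)^2 * (((t:ℚ)+1)^2)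
        = (4:ℚ)^(2*t+1) * (((t:ℚ)+1)^2) := by
      rw [hmQ] at hB
      linear_combination (-(s:ℚ)^2) * hA - (4:ℚ)^(2*t) * hB
    have htne : (((t:ℚ)+1)^2) ≠ 0 := by positivity
    have hkeyQ : (s:ℚ)^(2*t+2) * (G.coeff m)^2 = (4:ℚ)^(2*t+1) :=
      mul_right_cancel₀ htne h5
    rw [hgm] at hkeyQ
    have hkeyZ : s^(2*t+2) * (g.coeff m)^2 = 4^(2*t+1) := by exact_mod_cast hkeyQ
    have h6 : (s.natAbs)^(2*t+2) ∣ 4^(2*t+1) := by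
      have hd1 : s^(2*t+2) ∣ (4:ℤ)^(2*t+1) := ⟨(g.coeff m)^2, hkeyZ.symm⟩
      have hd2 := Int.natAbs_dvd_natAbs.mpr hd1
      simpa [Int.natAbs_pow] using hd2
    have hs0 : s ≠ 0 := by
      rintro rfl
      rw [zero_pow (by omega), zero_mul] at hkeyZ
      have : (0:ℤ) < 4^(2*t+1) := by positivity
      omega
    have hlt : s.natAbs < 4 := by
      by_contra hge
      push_neg at hge
      have h7 : (4:ℕ)^(2*t+2) ≤ s.natAbs^(2*t+2) := Nat.pow_le_pow_left hge _
      have h8 : s.natAbs^(2*t+2) ≤ 4^(2*t+1) := Nat.le_of_dvd (by positivity) h6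
      have h9 := Nat.pow_lt_pow_right (by norm_num : 1 < 4) (show 2*t+1 < 2*t+2 by omega)
      omega
    have hne3 : s.natAbs ≠ 3 := by
      rintro h3
      rw [h3] at h6
      have h8 : (3:ℕ) ∣ 4^(2*t+1) := dvd_trans (dvd_pow_self 3 (by omega)) h6
      have h9 := Nat.Prime.dvd_of_dvd_pow (by norm_num : Nat.Prime 3) h8
      omega
    omega

theorem x_sq_add_s_pellian_iff (s : ℤ) :
    (∃ f g : Polynomial ℤ, g ≠ 0 ∧ f ^ 2 - (X ^ 2 + C s) * g ^ 2 = 1) ↔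
    (s = 1 ∨ s = -1 ∨ s = 2 ∨ s = -2) := by
  constructor
  · rintro ⟨f, g, hg, h⟩
    exact pell_forward s f g hg h
  · rintro (rfl|rfl|rfl|rfl)
    · exact ⟨2*X^2+1, 2*X, mul_ne_zero (by norm_num) X_ne_zero,
        by rw [map_one]; ring⟩
    · exact ⟨X, 1, one_ne_zero, by rw [map_neg, map_one]; ring⟩
    · exact ⟨X^2+1, X, X_ne_zero,
        by rw [show C (2:ℤ) = 2 from map_ofNat _ 2]; ring⟩
    · exact ⟨X^2-1, X, X_ne_zero,
        by rw [show C (-2:ℤ) = -2 from by rw [map_neg, map_ofNat]]; ring⟩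
end

section
/- For s ∈ ℤ, the polynomial X² + X + s is Pellian over ℤ[X] (i.e., there exist f, g ∈ ℤ[X] with g ≠ 0 and f² − (X² + X + s)·g² = 1) if and only if s = 0. -/
open Polynomial

lemma deg_lemma (s t : ℤ) (P Q : Polynomial ℤ) (hQ : Q ≠ 0)
    (h : P ^ 2 - (X ^ 2 + X + C s) * Q ^ 2 = C t) :
    P.natDegree = Q.natDegree + 1 ∧ P.leadingCoeff ^ 2 = Q.leadingCoeff ^ 2 := by
  have hD : (X ^ 2 + X + C s : Polynomial ℤ).Monic := by monicity!
  have hDdeg : (X ^ 2 + X + C s : Polynomial ℤ).natDegree = 2 := by compute_degree!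
  have hQ2 : Q ^ 2 ≠ 0 := pow_ne_zero _ hQ
  have hDQ : ((X ^ 2 + X + C s) * Q ^ 2).natDegree = 2 + 2 * Q.natDegree := by
    rw [natDegree_mul hD.ne_zero hQ2, hDdeg, natDegree_pow]
  have hsum : P ^ 2 = (X ^ 2 + X + C s) * Q ^ 2 + C t := by linear_combination h
  have hlt : (C t).natDegree < ((X ^ 2 + X + C s) * Q ^ 2).natDegree := by
    rw [hDQ, natDegree_C]; omega
  have hdeg2 : (P ^ 2).natDegree = 2 + 2 * Q.natDegree := by
    rw [hsum, natDegree_add_eq_left_of_natDegree_lt hlt, hDQ]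
  have hPdeg : P.natDegree = Q.natDegree + 1 := by
    have := natDegree_pow P 2; omega
  refine ⟨hPdeg, ?_⟩
  have h1 : P.leadingCoeff ^ 2 = (P ^ 2).coeff ((P ^ 2).natDegree) := by
    rw [← leadingCoeff, leadingCoeff_pow]
  have h2 : (P ^ 2).coeff ((P ^ 2).natDegree) = ((X ^ 2 + X + C s) * Q ^ 2).coeff (2 + 2 * Q.natDegree) + (C t).coeff (2 + 2 * Q.natDegree) := by
    rw [hdeg2, hsum, coeff_add]
  have h3 : (C t).coeff (2 + 2 * Q.natDegree) = 0 := by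
    rw [coeff_C, if_neg (by omega)]
  have h4 : ((X ^ 2 + X + C s) * Q ^ 2).coeff (2 + 2 * Q.natDegree) = Q.leadingCoeff ^ 2 := by
    rw [← hDQ, ← leadingCoeff, leadingCoeff_mul, hD.leadingCoeff, one_mul, leadingCoeff_pow]
  rw [h1, h2, h3, h4, add_zero]

lemma two_ne_zmod (p : ℕ) [hp : Fact p.Prime] (hp2 : p ≠ 2) : (2 : ZMod p) ≠ 0 := by
  have : ((2 : ℕ) : ZMod p) ≠ 0 := by
    rw [Ne, ZMod.natCast_eq_zero_iff]
    exact fun h => hp2 (((Nat.prime_dvd_prime_iff_eq hp.out Nat.prime_two).mp h))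
  simpa using this

lemma psiD (s : ℤ) (p : ℕ) [hp : Fact p.Prime] (hp2 : p ≠ 2)
    (hs : ((1 - 4 * s : ℤ) : ZMod p) = 0) :
    (X ^ 2 + X + C s : Polynomial ℤ).map (Int.castRingHom (ZMod p)) =
      (X + C (2 : ZMod p)⁻¹) ^ 2 := by
  have h2p : (2 : ZMod p) ≠ 0 := two_ne_zmod p hp2
  set m : ZMod p := (2 : ZMod p)⁻¹ with hmdef
  have h2m : (2 : ZMod p) * m = 1 := mul_inv_cancel₀ h2p
  have h4p : (4 : ZMod p) ≠ 0 := by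
    intro h
    have h22 : (2 : ZMod p) * 2 = 0 := by linear_combination h
    rcases mul_eq_zero.mp h22 with h' | h' <;> exact h2p h'
  have h4s : (4 : ZMod p) * ((s : ℤ) : ZMod p) = 1 := by
    push_cast at hs
    linear_combination -hs
  have hm2 : m * m = ((s : ℤ) : ZMod p) := by
    have hA : (4 : ZMod p) * (m * m) = 1 := by
      have e : (4 : ZMod p) * (m * m) = ((2 : ZMod p) * m) * ((2 : ZMod p) * m) := by ring
      rw [e, h2m, one_mul]
    exact mul_left_cancel₀ h4p (by rw [hA, h4s])
  have e : ((X + C m) ^ 2 : Polynomial (ZMod p)) = X ^ 2 + C (2 * m) * X + C (m * m) := by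
    simp only [map_mul, map_ofNat]
    ring
  rw [e, h2m, hm2, C_1, one_mul]
  simp [Polynomial.map_add, Polynomial.map_pow]

lemma key (s : ℤ) (p : ℕ) [hp : Fact p.Prime] (hp2 : p ≠ 2)
    (hs : ((1 - 4 * s : ℤ) : ZMod p) = 0) (n : ℕ) :
    ∀ (P Q : Polynomial ℤ) (k : ℕ), Q.natDegree = n → Q ≠ 0 →
      P.leadingCoeff = Q.leadingCoeff →
      P ^ 2 - (X ^ 2 + X + C s) * Q ^ 2 = C ((1 - 4 * s) ^ k) →
      P.map (Int.castRingHom (ZMod p)) -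
        Q.map (Int.castRingHom (ZMod p)) * (X + C (2 : ZMod p)⁻¹) ≠ 0 →
      False := by
  induction n using Nat.strong_induction_on with
  | _ n IH =>
  intro P Q k hdeg hQ hlc hnorm hJ
  have h2p : (2 : ZMod p) ≠ 0 := two_ne_zmod p hp2
  set m : ZMod p := (2 : ZMod p)⁻¹ with hmdef
  have h2m : (2 : ZMod p) * m = 1 := mul_inv_cancel₀ h2p
  have hψD : (X ^ 2 + X + C s : Polynomial ℤ).map (Int.castRingHom (ZMod p)) = (X + C m) ^ 2 :=
    psiD s p hp2 hs

  rcases n with _ | n0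
  · -- base case : Q constant
    obtain ⟨hPdeg, hlc2⟩ := deg_lemma s ((1 - 4 * s) ^ k) P Q hQ hnorm
    have hQf : Q = C (Q.coeff 0) := eq_C_of_natDegree_eq_zero hdeg
    have hPf : P = C (P.coeff 1) * X + C (P.coeff 0) :=
      eq_X_add_C_of_natDegree_le_one (by omega)
    have hlcP : P.leadingCoeff = P.coeff 1 := by rw [leadingCoeff, hPdeg, hdeg]
    have hlcQ : Q.leadingCoeff = Q.coeff 0 := by rw [leadingCoeff, hdeg]
    have hac : P.coeff 1 = Q.coeff 0 := by rw [← hlcP, ← hlcQ, hlc]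
    have hcne : Q.coeff 0 ≠ 0 := by
      rw [← hlcQ]; exact leadingCoeff_ne_zero.mpr hQ
    rw [hPf, hQf] at hnorm
    have e0 := congrArg (Polynomial.eval 0) hnorm
    have e1 := congrArg (Polynomial.eval (-1)) hnorm
    simp only [eval_sub, eval_add, eval_mul, eval_pow, eval_X, eval_C, eval_one] at e0 e1
    have hkey : P.coeff 1 * (P.coeff 1 - 2 * P.coeff 0) = 0 := by linear_combination e1 - e0
    have ha2b : P.coeff 1 = 2 * P.coeff 0 := by
      rcases mul_eq_zero.mp hkey with h' | h'
      · exact absurd (hac ▸ h') hcne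
      · linarith
    apply hJ
    rw [hPf, hQf]
    simp only [Polynomial.map_add, Polynomial.map_mul, Polynomial.map_X, map_C,
      Int.coe_castRingHom]
    have hb : ((Q.coeff 0 : ℤ) : ZMod p) = 2 * ((P.coeff 0 : ℤ) : ZMod p) := by
      rw [← hac, ha2b]; push_cast; ring
    rw [hb]
    have hc1 : ((P.coeff 1 : ℤ) : ZMod p) = 2 * ((P.coeff 0 : ℤ) : ZMod p) := by
      rw [ha2b]; push_cast; ring
    rw [hc1]
    simp only [C_mul]
    have hCm2 : (C (2 : ZMod p)) * C m = 1 := by rw [← C_mul, h2m, C_1]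
    linear_combination (- C (((P.coeff 0 : ℤ) : ZMod p))) * hCm2
  · -- inductive step : Q.natDegree = n0 + 1
    obtain ⟨hPdeg, hlc2⟩ := deg_lemma s ((1 - 4 * s) ^ k) P Q hQ hnorm
    have hr : (1 - 4 * s : ℤ) ≠ 0 := by omega
    set P' : Polynomial ℤ := (C 2 * X + 1) * P - C 2 * ((X ^ 2 + X + C s) * Q) with hP'
    set Q' : Polynomial ℤ := (C 2 * X + 1) * Q - C 2 * P with hQ'
    have h4D : (C 2 * X + 1 : Polynomial ℤ) ^ 2 - (C 2 * C 2) * (X ^ 2 + X + C s) = C (1 - 4 * s) := by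
      simp only [map_ofNat, map_sub, map_mul, map_one]
      ring
    have hnorm' : P' ^ 2 - (X ^ 2 + X + C s) * Q' ^ 2 = C ((1 - 4 * s) ^ (k + 1)) := by
      have e : P' ^ 2 - (X ^ 2 + X + C s) * Q' ^ 2 =
          ((C 2 * X + 1) ^ 2 - (C 2 * C 2) * (X ^ 2 + X + C s)) * (P ^ 2 - (X ^ 2 + X + C s) * Q ^ 2) := by
        rw [hP', hQ']; ring
      rw [e, h4D, hnorm, ← C_mul, ← pow_succ']
    have hrQ : (C 2 * X + 1) * Q' + C 2 * P' = C (1 - 4 * s) * Q := by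
      have e : (C 2 * X + 1) * Q' + C 2 * P' =
          ((C 2 * X + 1) ^ 2 - (C 2 * C 2) * (X ^ 2 + X + C s)) * Q := by
        rw [hP', hQ']; ring
      rw [e, h4D]
    have hQ'ne : Q' ≠ 0 := by
      intro h0
      have h1 : P' ^ 2 = C ((1 - 4 * s) ^ (k + 1)) := by
        rw [← hnorm', h0]; ring
      have h2 : (P' ^ 2).natDegree = 0 := by rw [h1, natDegree_C]
      have h3 : P'.natDegree = 0 := by have := natDegree_pow P' 2; omega
      have h4 : (C (1 - 4 * s) * Q).natDegree = Q.natDegree := natDegree_C_mul hr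
      have h5 : C (1 - 4 * s) * Q = C 2 * P' := by rw [← hrQ, h0]; ring
      have h6 : (C 2 * P').natDegree = P'.natDegree := by
        have : (C (2:ℤ) * P').natDegree = P'.natDegree := natDegree_C_mul (by norm_num)
        simpa using this
      rw [h5, h6, h3] at h4
      omega
    obtain ⟨hP'deg, hlc2'⟩ := deg_lemma s ((1 - 4 * s) ^ (k + 1)) P' Q' hQ'ne hnorm'
    -- leading coefficient equality
    have hZ : P * Q' - Q * P' = C (-(2 * (1 - 4 * s) ^ k)) := by
      have e : P * Q' - Q * P' = -(C 2) * (P ^ 2 - (X ^ 2 + X + C s) * Q ^ 2) := by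
        rw [hP', hQ']; ring
      rw [e, hnorm, neg_mul, ← C_mul, ← C_neg]
    have hcoefZ := congrArg (fun q => Polynomial.coeff q (P.natDegree + Q'.natDegree)) hZ
    simp only [coeff_sub] at hcoefZ
    rw [coeff_mul_degree_add_degree] at hcoefZ
    have hidx2 : P.natDegree + Q'.natDegree = Q.natDegree + P'.natDegree := by omega
    rw [hidx2, coeff_mul_degree_add_degree, coeff_C, if_neg (by omega)] at hcoefZ
    have hlcQne : Q.leadingCoeff ≠ 0 := leadingCoeff_ne_zero.mpr hQ
    have hlc' : P'.leadingCoeff = Q'.leadingCoeff := by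
      rw [hlc] at hcoefZ
      have e : Q.leadingCoeff * Q'.leadingCoeff = Q.leadingCoeff * P'.leadingCoeff := by
        linear_combination hcoefZ
      exact (mul_left_cancel₀ hlcQne e).symm
    -- degree drop
    have hlcQ'ne : Q'.leadingCoeff ≠ 0 := leadingCoeff_ne_zero.mpr hQ'ne
    have hcoef2 := congrArg (fun q => Polynomial.coeff q (Q'.natDegree + 1)) hrQ
    simp only [coeff_add] at hcoef2
    have hCX : (C 2 * X + 1 : Polynomial ℤ).natDegree = 1 := by compute_degree!
    have hCXlc : (C 2 * X + 1 : Polynomial ℤ).leadingCoeff = 2 := by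
      rw [Polynomial.leadingCoeff, hCX]
      simp [coeff_one]
    have e1 : ((C 2 * X + 1) * Q').coeff (Q'.natDegree + 1) = 2 * Q'.leadingCoeff := by
      have e := coeff_mul_degree_add_degree (C 2 * X + 1 : Polynomial ℤ) Q'
      rw [hCX, hCXlc] at e
      rw [show Q'.natDegree + 1 = 1 + Q'.natDegree by omega]
      exact e
    have e2 : (C 2 * P').coeff (Q'.natDegree + 1) = 2 * P'.leadingCoeff := by
      rw [coeff_C_mul, show Q'.natDegree + 1 = P'.natDegree from hP'deg.symm, coeff_natDegree]
    rw [e1, e2, hlc'] at hcoef2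
    have hne : (C (1 - 4 * s) * Q).coeff (Q'.natDegree + 1) ≠ 0 := by
      rw [← hcoef2]
      intro h
      apply hlcQ'ne
      omega
    have hle : Q'.natDegree + 1 ≤ (C (1 - 4 * s) * Q).natDegree := le_natDegree_of_ne_zero hne
    rw [natDegree_C_mul hr] at hle
    -- the invariant J
    have hfact : (C (2 : ZMod p) * X + 1 : Polynomial (ZMod p)) = C 2 * (X + C m) := by
      rw [mul_add, ← C_mul, h2m, C_1]
    have hmC2 : (C (2:ℤ) : Polynomial ℤ).map (Int.castRingHom (ZMod p)) = C (2 : ZMod p) := by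
      simp
      exact (map_ofNat C 2).symm
    have hmXone : ((C 2 * X + 1 : Polynomial ℤ)).map (Int.castRingHom (ZMod p)) = C 2 * (X + C m) := by
      simp only [Polynomial.map_add, Polynomial.map_mul, Polynomial.map_one, Polynomial.map_X]
      rw [hmC2, hfact]
    have hmapP' : P'.map (Int.castRingHom (ZMod p)) =
        C 2 * (X + C m) * P.map (Int.castRingHom (ZMod p)) -
          C 2 * ((X + C m) ^ 2 * Q.map (Int.castRingHom (ZMod p))) := by
      have e : P'.map (Int.castRingHom (ZMod p)) =
          ((C 2 * X + 1 : Polynomial ℤ).map (Int.castRingHom (ZMod p))) * P.map (Int.castRingHom (ZMod p)) -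
            ((C 2 : Polynomial ℤ).map (Int.castRingHom (ZMod p))) *
              (((X ^ 2 + X + C s : Polynomial ℤ)).map (Int.castRingHom (ZMod p)) * Q.map (Int.castRingHom (ZMod p))) := by
        rw [hP']
        simp only [Polynomial.map_sub, Polynomial.map_mul]
      rw [e, hψD, hmXone, hmC2]
    have hmapQ' : Q'.map (Int.castRingHom (ZMod p)) =
        C 2 * (X + C m) * Q.map (Int.castRingHom (ZMod p)) -
          C 2 * P.map (Int.castRingHom (ZMod p)) := by
      have e : Q'.map (Int.castRingHom (ZMod p)) =
          ((C 2 * X + 1 : Polynomial ℤ).map (Int.castRingHom (ZMod p))) * Q.map (Int.castRingHom (ZMod p)) -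
            ((C 2 : Polynomial ℤ).map (Int.castRingHom (ZMod p))) * P.map (Int.castRingHom (ZMod p)) := by
        rw [hQ']
        simp only [Polynomial.map_sub, Polynomial.map_mul]
      rw [e, hmXone, hmC2]
    have hJ'' : P'.map (Int.castRingHom (ZMod p)) -
        Q'.map (Int.castRingHom (ZMod p)) * (X + C m) =
        2 * C 2 * (X + C m) *
          (P.map (Int.castRingHom (ZMod p)) - Q.map (Int.castRingHom (ZMod p)) * (X + C m)) := by
      rw [hmapP', hmapQ']; ring
    have hJ'ne : P'.map (Int.castRingHom (ZMod p)) -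
        Q'.map (Int.castRingHom (ZMod p)) * (X + C m) ≠ 0 := by
      rw [hJ'']
      refine mul_ne_zero (mul_ne_zero (mul_ne_zero ?_ ?_) ?_) hJ
      · rw [show (2 : Polynomial (ZMod p)) = C (2 : ZMod p) from (map_ofNat C 2).symm]
        exact C_ne_zero.mpr h2p
      · exact C_ne_zero.mpr h2p
      · exact (monic_X_add_C m).ne_zero
    exact IH Q'.natDegree (by omega) P' Q' (k + 1) rfl hQ'ne hlc' hnorm' hJ'ne

theorem x_sq_add_x_add_s_pellian_iff (s : ℤ) :
    (∃ f g : Polynomial ℤ, g ≠ 0 ∧ f ^ 2 - (X ^ 2 + X + C s) * g ^ 2 = 1) ↔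
    s = 0 := by
  constructor
  · rintro ⟨f, g, hg, h⟩
    by_contra hs0
    have hna1 : (1 - 4 * s : ℤ).natAbs ≠ 1 := by omega
    have hna0 : (1 - 4 * s : ℤ).natAbs ≠ 0 := by omega
    set p : ℕ := (1 - 4 * s : ℤ).natAbs.minFac with hpdef
    have hpp : p.Prime := Nat.minFac_prime hna1
    haveI : Fact p.Prime := ⟨hpp⟩
    have hdvd : (p : ℤ) ∣ (1 - 4 * s) := by
      have h1 : (p : ℤ) ∣ ((1 - 4 * s : ℤ).natAbs : ℤ) :=
        Int.natCast_dvd_natCast.mpr (Nat.minFac_dvd _)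
      exact h1.trans (Int.natAbs_dvd.mpr dvd_rfl)
    have hp2 : p ≠ 2 := by
      intro hpe
      rw [hpe] at hdvd
      omega
    have hs' : ((1 - 4 * s : ℤ) : ZMod p) = 0 :=
      (ZMod.intCast_zmod_eq_zero_iff_dvd _ _).mpr hdvd
    have hnorm : f ^ 2 - (X ^ 2 + X + C s) * g ^ 2 = C ((1 - 4 * s) ^ 0) := by
      rw [pow_zero, C_1]; exact h
    obtain ⟨hfdeg, hlc2⟩ := deg_lemma s ((1 - 4 * s) ^ 0) f g hg hnorm
    have hmap := congrArg (Polynomial.map (Int.castRingHom (ZMod p))) h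
    simp only [Polynomial.map_sub, Polynomial.map_mul, Polynomial.map_pow,
      Polynomial.map_one] at hmap
    rw [psiD s p hp2 hs'] at hmap
    have hsq : f.leadingCoeff * f.leadingCoeff = g.leadingCoeff * g.leadingCoeff := by
      rw [← pow_two, ← pow_two]; exact hlc2
    rcases mul_self_eq_mul_self_iff.mp hsq with hcase | hcase
    · refine key s p hp2 hs' g.natDegree f g 0 rfl hg hcase hnorm ?_
      intro hJ0
      rw [sub_eq_zero] at hJ0
      rw [hJ0] at hmap
      have hz : (0 : Polynomial (ZMod p)) = 1 := by linear_combination hmap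
      exact zero_ne_one hz
    · refine key s p hp2 hs' (-g).natDegree f (-g) 0 ?_ (neg_ne_zero.mpr hg) ?_ ?_ ?_
      · rfl
      · rw [leadingCoeff_neg]; exact hcase
      · rw [neg_sq]; exact hnorm
      · intro hJ0
        rw [sub_eq_zero] at hJ0
        rw [Polynomial.map_neg] at hJ0
        rw [hJ0] at hmap
        have hz : (0 : Polynomial (ZMod p)) = 1 := by linear_combination hmap
        exact zero_ne_one hz
  · rintro rfl
    refine ⟨2 * X + 1, 2, ?_, ?_⟩
    · intro h0
      have := congrArg (fun q => Polynomial.coeff q 0) h0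
      norm_num at this
    · rw [C_0, add_zero]
      ring
end

section
/- Let a ∈ ℤ with a ≠ 0. Then the polynomial (X − a)²·(X² − 1) is not Pellian over ℤ[X]: there do not exist f, g ∈ ℤ[X] with g ≠ 0 and f² − (X − a)²(X² − 1)·g² = 1. -/
open Polynomial


private lemma pell_deg (f h : ℤ[X]) (hh : h ≠ 0) (e : f ^ 2 - (X ^ 2 - 1) * h ^ 2 = 1) :
    f.natDegree = h.natDegree + 1 ∧ f.leadingCoeff ^ 2 = h.leadingCoeff ^ 2 := by
  have hd0 : (X ^ 2 - 1 : ℤ[X]) ≠ 0 := by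
    intro h0
    have := natDegree_X_pow_sub_C (n := 2) (r := (1 : ℤ))
    rw [map_one, h0] at this
    simp at this
  have hq0 : (X ^ 2 - 1 : ℤ[X]) * h ^ 2 ≠ 0 := mul_ne_zero hd0 (pow_ne_zero 2 hh)
  have hdq : ((X ^ 2 - 1 : ℤ[X]) * h ^ 2).natDegree = 2 + 2 * h.natDegree := by
    rw [natDegree_mul hd0 (pow_ne_zero 2 hh), natDegree_pow]
    congr 1
    have := natDegree_X_pow_sub_C (n := 2) (r := (1 : ℤ))
    rwa [map_one] at this
  have hfq : f ^ 2 = 1 + (X ^ 2 - 1) * h ^ 2 := by linear_combination e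
  have hdlt : (1 : ℤ[X]).degree < ((X ^ 2 - 1 : ℤ[X]) * h ^ 2).degree := by
    rw [degree_one, degree_eq_natDegree hq0, hdq]
    have h2 : (0:ℕ) < 2 + 2 * h.natDegree := by omega
    exact_mod_cast h2
  have hdf : f.natDegree = h.natDegree + 1 := by
    have h1 : (f ^ 2).natDegree = 2 + 2 * h.natDegree := by
      rw [hfq, natDegree_add_eq_right_of_natDegree_lt, hdq]
      rw [natDegree_one, hdq]; omega
    rw [natDegree_pow] at h1; omega
  refine ⟨hdf, ?_⟩
  have hlc : (f ^ 2).leadingCoeff = ((X ^ 2 - 1 : ℤ[X]) * h ^ 2).leadingCoeff := by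
    rw [hfq, leadingCoeff_add_of_degree_lt hdlt]
  rw [leadingCoeff_pow, leadingCoeff_mul, leadingCoeff_pow] at hlc
  have hm : (X ^ 2 - 1 : ℤ[X]).leadingCoeff = 1 := by
    have : (X ^ 2 - 1 : ℤ[X]) = X ^ 2 - C 1 := by rw [map_one]
    rw [this]
    exact (monic_X_pow_sub_C (1 : ℤ) (by norm_num)).leadingCoeff
  rw [hm, one_mul] at hlc
  exact hlc


private lemma int_ineq (a u v c : ℤ) (ha : a ≠ 0) (he : u ^ 2 - (a ^ 2 - 1) * v ^ 2 = 1)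
    (hs : 0 < a * u * v) (hv : c ≤ |v|) :
    c + 1 ≤ |u + a * v| ∧ 0 < a * (a * u + (a ^ 2 - 1) * v) * (u + a * v) := by
  have ha2 : 1 ≤ a ^ 2 := by nlinarith [sq_nonneg a, Int.one_le_abs ha, sq_abs a]
  have hu2 : 1 ≤ u ^ 2 := by nlinarith [sq_nonneg v]
  have hw : |a * v| = |a| * |v| := abs_mul a v
  have hav : |v| ≤ |a * v| := by
    rw [hw]
    nlinarith [abs_nonneg v, Int.one_le_abs ha]
  constructor
  · rcases lt_trichotomy u 0 with hu | hu | hu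
    · have havn : a * v < 0 := by nlinarith
      have : |u + a * v| = -(u + a * v) := abs_of_neg (by omega)
      rw [this]
      have : |a * v| = -(a * v) := abs_of_neg havn
      omega
    · exfalso; rw [hu] at hu2; simp at hu2
    · have havp : 0 < a * v := by nlinarith
      have : |u + a * v| = u + a * v := abs_of_pos (by omega)
      rw [this]
      have : |a * v| = a * v := abs_of_pos havp
      omega
  · nlinarith [mul_pos (show (0:ℤ) < 2 * a ^ 2 - 1 by nlinarith) hs,
      mul_nonneg (mul_nonneg (sq_nonneg a) (by nlinarith : (0:ℤ) ≤ a ^ 2 - 1)) (sq_nonneg v),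
      sq_nonneg (a*u), sq_nonneg (a*v), mul_pos hs hs]

private lemma key_s13 (a : ℤ) (ha : a ≠ 0) :
    ∀ n : ℕ, ∀ f h : ℤ[X], f ^ 2 - (X ^ 2 - 1) * h ^ 2 = 1 → h ≠ 0 →
      h.natDegree = n → f.leadingCoeff = h.leadingCoeff →
      ((n : ℤ) + 1 ≤ |h.eval a| ∧ 0 < a * f.eval a * h.eval a) := by
  intro n
  induction n using Nat.strong_induction_on with
  | _ n ih =>
    intro f h e hh hn hl
    set f1 : ℤ[X] := X * f - (X ^ 2 - 1) * h with hf1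
    set h1 : ℤ[X] := X * h - f with hh1
    have e1 : f1 ^ 2 - (X ^ 2 - 1) * h1 ^ 2 = 1 := by
      rw [hf1, hh1]; linear_combination e
    have hfrec : f = X * f1 + (X ^ 2 - 1) * h1 := by rw [hf1, hh1]; ring
    have hhrec : h = f1 + X * h1 := by rw [hf1, hh1]; ring
    by_cases h10 : h1 = 0
    · -- base case: h = f1, f1^2 = 1
      rw [h10] at e1 hfrec hhrec
      simp only [mul_zero, add_zero, sub_zero] at e1 hfrec hhrec
      have hsq : h ^ 2 = 1 := by rw [hhrec]; simpa using e1
      have hn0 : n = 0 := by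
        have := congrArg natDegree hsq
        rw [natDegree_pow, natDegree_one] at this
        omega
      have heva : (h.eval a) ^ 2 = 1 := by
        have := congrArg (eval a) hsq
        simpa using this
      have habs : |h.eval a| = 1 := by
        rcases sq_eq_one_iff.mp heva with h' | h' <;> simp [h']
      constructor
      · rw [hn0, habs]; norm_num
      · have hfe : f.eval a = a * h.eval a := by
          rw [hfrec, hhrec]; simp
        rw [hfe]
        have : a * (a * h.eval a) * h.eval a = a ^ 2 * (h.eval a) ^ 2 := by ring
        rw [this, heva, mul_one]
        positivity
    · -- inductive step
      obtain ⟨hdf, hlc2⟩ := pell_deg f h hh e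
      obtain ⟨hdf1, hlc12⟩ := pell_deg f1 h1 h10 e1
      set m := h1.natDegree with hm
      -- h1 * (f + X*h) = h^2 - 1
      have prod : h1 * (f + X * h) = h ^ 2 - 1 := by
        rw [hh1]; linear_combination -e
      -- f + X*h has natDegree n+1
      have hlcne : h.leadingCoeff ≠ 0 := leadingCoeff_ne_zero.mpr hh
      have hXh : (X * h).natDegree = n + 1 := by
        rw [natDegree_X_mul hh, hn]
      have hcoeff : (f + X * h).coeff (n + 1) = 2 * h.leadingCoeff := by
        rw [coeff_add, coeff_X_mul]
        have c1 : f.coeff (n + 1) = f.leadingCoeff := by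
          rw [leadingCoeff, hdf, hn]
        have c2 : h.coeff n = h.leadingCoeff := by rw [leadingCoeff, hn]
        rw [c1, c2, hl]; ring
      have hfXh0 : f + X * h ≠ 0 := fun h0 => by
        rw [h0, coeff_zero] at hcoeff
        exact hlcne (by omega)
      have hdfXh : (f + X * h).natDegree = n + 1 := by
        have hle : (f + X * h).natDegree ≤ n + 1 := by
          refine (natDegree_add_le _ _).trans ?_
          rw [hdf, hn, hXh]; omega
        have hge : n + 1 ≤ (f + X * h).natDegree := by
          apply le_natDegree_of_ne_zero
          rw [hcoeff]
          intro h0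
          exact hlcne (by omega)
        omega
      -- degree bookkeeping
      have hsub0 : h ^ 2 - 1 ≠ 0 := by
        rw [← prod]; exact mul_ne_zero h10 hfXh0
      have hdeq : m + (n + 1) = (h ^ 2 - 1).natDegree := by
        rw [← prod, natDegree_mul h10 hfXh0, hdfXh]
      have hdle : (h ^ 2 - 1).natDegree ≤ 2 * n := by
        refine (natDegree_sub_le _ _).trans ?_
        rw [natDegree_pow, natDegree_one, hn]; omega
      have hmlt : m + 1 ≤ n := by omega
      have hnle : n ≤ m + 1 := by
        calc n = h.natDegree := hn.symm
        _ ≤ max f1.natDegree (X * h1).natDegree := by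
            rw [hhrec]; exact natDegree_add_le _ _
        _ ≤ m + 1 := by
            rw [hdf1, natDegree_X_mul h10]; omega
      have hnm : n = m + 1 := le_antisymm hnle hmlt
      -- leading coefficient alignment for (f1, h1)
      have hlc1 : f1.leadingCoeff = h1.leadingCoeff := by
        have hfac : (f1.leadingCoeff - h1.leadingCoeff) *
            (f1.leadingCoeff + h1.leadingCoeff) = 0 := by linear_combination hlc12
        rcases mul_eq_zero.mp hfac with h' | h'
        · linarith
        · exfalso
          have hch : h.coeff n = h.leadingCoeff := by rw [leadingCoeff, hn]
          have : h.coeff n = f1.coeff n + h1.coeff m := by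
            rw [hhrec, coeff_add, hnm, coeff_X_mul]
          rw [hch] at this
          have c1 : f1.coeff n = f1.leadingCoeff := by rw [leadingCoeff, hdf1, hnm]
          have c2 : h1.coeff m = h1.leadingCoeff := by rw [leadingCoeff]
          rw [c1, c2] at this
          apply hlcne
          rw [this]
          linarith
      obtain ⟨hv, hs⟩ := ih m (by omega) f1 h1 e1 h10 rfl hlc1
      -- evaluate everything at a
      set u := f1.eval a with hu
      set v := h1.eval a with hvv
      have hueq : u ^ 2 - (a ^ 2 - 1) * v ^ 2 = 1 := by
        have := congrArg (eval a) e1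
        simpa [hu, hvv] using this
      have hhe : h.eval a = u + a * v := by rw [hhrec]; simp [hu, hvv]
      have hfe : f.eval a = a * u + (a ^ 2 - 1) * v := by
        rw [hfrec]; simp [hu, hvv]
      obtain ⟨A, B⟩ := int_ineq a u v ((m : ℤ) + 1) ha hueq hs hv
      constructor
      · rw [hhe, hnm]; push_cast; linarith
      · rw [hfe, hhe]; exact B


theorem shifted_square_times_x_sq_sub_one_not_pellian (a : ℤ) (ha : a ≠ 0) :
    ¬ ∃ f g : Polynomial ℤ, g ≠ 0 ∧
      f ^ 2 - ((X - C a) ^ 2 * (X ^ 2 - 1)) * g ^ 2 = 1 := by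
  rintro ⟨f, g, hg, e⟩
  set h : ℤ[X] := (X - C a) * g with hhdef
  have hh0 : h ≠ 0 := mul_ne_zero (X_sub_C_ne_zero a) hg
  have e' : f ^ 2 - (X ^ 2 - 1) * h ^ 2 = 1 := by rw [hhdef]; linear_combination e
  have heva : h.eval a = 0 := by rw [hhdef]; simp
  obtain ⟨_, hlc2⟩ := pell_deg f h hh0 e'
  have hfac : (f.leadingCoeff - h.leadingCoeff) *
      (f.leadingCoeff + h.leadingCoeff) = 0 := by linear_combination hlc2
  have habs : (h.natDegree : ℤ) + 1 ≤ |h.eval a| := by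
    rcases mul_eq_zero.mp hfac with h' | h'
    · exact (key_s13 a ha h.natDegree f h e' hh0 rfl (by linarith)).1
    · have e'' : (-f) ^ 2 - (X ^ 2 - 1) * h ^ 2 = 1 := by linear_combination e'
      have : (-f).leadingCoeff = h.leadingCoeff := by
        rw [leadingCoeff_neg]; linarith
      exact (key_s13 a ha h.natDegree (-f) h e'' hh0 rfl this).1
  rw [heva] at habs
  simp at habs
  omega
end

section
/- For every a ∈ ℤ, the polynomial (X − a)²·(X² + X) is not Pellian over ℤ[X]: there do not exist f, g ∈ ℤ[X] with g ≠ 0 and f² − (X − a)²(X² + X)·g² = 1. -/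
open Polynomial

/-- Fundamental Pell solution powers for `d = X^2 + X` over `ℤ[X]`:
`FH n = (F n, H n)` with `F n + H n √d = (2X+1 + 2√d)^n`. -/
private noncomputable def FH : ℕ → Polynomial ℤ × Polynomial ℤ
  | 0 => (1, 0)
  | n+1 => ((2*X+1) * (FH n).1 + 2*(X^2+X) * (FH n).2,
            (2*X+1) * (FH n).2 + 2 * (FH n).1)

private lemma FH_pell (n : ℕ) : (FH n).1^2 - (X^2+X) * (FH n).2^2 = 1 := by
  induction n with
  | zero => simp [FH]
  | succ n ih =>
    simp only [FH]
    linear_combination ((2*(X:Polynomial ℤ)+1)^2 - 4*(X^2+X)) * ih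

private lemma sq_eq' {A B : Polynomial ℤ} (h : A^2 = B^2) : A = B ∨ A = -B := by
  have h2 : (A - B) * (A + B) = 0 := by linear_combination h
  rcases mul_eq_zero.mp h2 with h3 | h3
  · exact Or.inl (sub_eq_zero.mp h3)
  · exact Or.inr (eq_neg_of_add_eq_zero_left h3)

private lemma descent (f h : Polynomial ℤ) (heq : f^2 - (X^2+X)*h^2 = 1)
    (hdeg : 1 ≤ h.natDegree) :
    ∃ f' h' : Polynomial ℤ, f'^2 - (X^2+X)*h'^2 = 1 ∧
      h'.natDegree < h.natDegree ∧ h = (2*X+1) * h' + 2 * f' := by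
  set A : Polynomial ℤ := (2*X+1)*h - 2*f with hA
  set B : Polynomial ℤ := (2*X+1)*h + 2*f with hB
  have hprod : A * B = h^2 - 4 := by rw [hA, hB]; linear_combination (-4) * heq
  have hh0 : h ≠ 0 := by
    intro hc; rw [hc] at hdeg; simp at hdeg
  have h4 : h^2 - 4 ≠ 0 := by
    intro hc
    have h1 : h^2 = 4 := by linear_combination hc
    have h2 : (h^2).natDegree = (4 : Polynomial ℤ).natDegree := by rw [h1]
    rw [natDegree_pow, natDegree_ofNat] at h2
    omega
  have hA0 : A ≠ 0 := fun hc => h4 (by rw [← hprod, hc, zero_mul])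
  have hB0 : B ≠ 0 := fun hc => h4 (by rw [← hprod, hc, mul_zero])
  have hprodDeg : A.natDegree + B.natDegree = 2 * h.natDegree := by
    rw [← natDegree_mul hA0 hB0, hprod]
    rw [show (h^2 - 4 : Polynomial ℤ) = h^2 - C 4 by norm_num]
    rw [natDegree_sub_C, natDegree_pow]
  have hsumDeg : h.natDegree + 1 ≤ max A.natDegree B.natDegree := by
    have hs : A + B = (C 4 * X + C 2) * h := by
      rw [hA, hB]
      have : (C (4:ℤ) * X + C 2) = 2*(2*X+1) := by
        simp only [map_ofNat]; ring
      rw [this]; ring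
    have hd2 : ((C (4:ℤ) * X + C 2) * h).natDegree = h.natDegree + 1 := by
      rw [natDegree_mul (by intro hc; simpa using congrArg (fun q => coeff q 1) hc) hh0,
        natDegree_linear (by norm_num)]
      omega
    calc h.natDegree + 1 = (A+B).natDegree := by rw [hs, hd2]
      _ ≤ max A.natDegree B.natDegree := natDegree_add_le A B
  rcases le_total A.natDegree B.natDegree with hle | hle
  · refine ⟨(2*X+1)*f - 2*(X^2+X)*h, A, ?_, ?_, ?_⟩
    · linear_combination heq
    · have hmax : max A.natDegree B.natDegree = B.natDegree := max_eq_right hle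
      omega
    · rw [hA]; ring
  · refine ⟨-((2*X+1)*f + 2*(X^2+X)*h), B, ?_, ?_, ?_⟩
    · linear_combination heq
    · have hmax : max A.natDegree B.natDegree = A.natDegree := max_eq_left hle
      omega
    · rw [hB]; ring

private lemma base (f h : Polynomial ℤ) (hd : h.natDegree = 0)
    (heq : f^2 - (X^2+X)*h^2 = 1) (hh : h ≠ 0) :
    ∃ n : ℕ, h^2 = ((FH (n+1)).2)^2 := by
  obtain ⟨c, rfl⟩ := natDegree_eq_zero.mp hd
  have hc : c ≠ 0 := fun h0 => hh (by rw [h0]; exact map_zero C)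
  have hR : f^2 = (C c)^2 * X^2 + (C c)^2 * X + 1 := by linear_combination heq
  have hdf : f.natDegree ≤ 1 := by
    have h1 : (f^2).natDegree = 2 := by
      rw [hR]
      compute_degree!
    rw [natDegree_pow] at h1
    omega
  obtain ⟨u, v, rfl⟩ := exists_eq_X_add_C_of_natDegree_le_one hdf
  have e0 := congrArg (eval 0) heq
  have e1 := congrArg (eval 1) heq
  have e2 := congrArg (eval (-1)) heq
  simp only [eval_sub, eval_mul, eval_add, eval_pow, eval_X, eval_C, eval_one] at e0 e1 e2
  have h1 : u^2 = 2*u*v := by nlinarith [e0, e2]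
  have h2 : c^2 = u^2 := by nlinarith [e0, e1, h1]
  have hu : u ≠ 0 := by
    intro h0
    rw [h0] at h2
    simp at h2
    exact hc (by nlinarith [h2])
  have huv : u = 2*v := by
    have : u * (u - 2*v) = 0 := by nlinarith [h1]
    rcases mul_eq_zero.mp this with h0 | h0
    · exact absurd h0 hu
    · linarith
  have hc4 : c^2 = 4 := by nlinarith [e0, h2, huv]
  refine ⟨0, ?_⟩
  have hH1 : ((FH 1).2 : Polynomial ℤ) = 2 := by simp [FH]
  rw [hH1, ← map_pow, hc4]
  norm_num

private lemma classify : ∀ N : ℕ, ∀ f h : Polynomial ℤ, h.natDegree ≤ N →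
    f^2 - (X^2+X)*h^2 = 1 → h ≠ 0 → ∃ n : ℕ, h^2 = ((FH (n+1)).2)^2 := by
  intro N
  induction N with
  | zero => exact fun f h hd heq hh => base f h (Nat.le_zero.mp hd) heq hh
  | succ N ih =>
    intro f h hd heq hh
    rcases Nat.lt_or_ge h.natDegree 1 with hd0 | hd1
    · exact base f h (by omega) heq hh
    · obtain ⟨f', h', heq', hlt, hrep⟩ := descent f h heq hd1
      by_cases hh' : h' = 0
      · refine ⟨0, ?_⟩
        have hf1 : f'^2 = 1 := by
          rw [hh'] at heq'; linear_combination heq'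
        have hH1 : ((FH 1).2 : Polynomial ℤ) = 2 := by simp [FH]
        rw [hH1, hrep, hh']
        linear_combination 4 * hf1
      · obtain ⟨m, hm⟩ := ih f' h' (by omega) heq' hh'
        have hf2 : f'^2 = ((FH (m+1)).1)^2 := by
          have hp := FH_pell (m+1)
          linear_combination heq' - hp + (X^2+X) * hm
        have hcs : (h'*f')^2 = ((FH (m+1)).2 * (FH (m+1)).1)^2 := by
          rw [mul_pow, mul_pow, hm, hf2]
        rcases sq_eq' hcs with hc | hc
        · refine ⟨m+1, ?_⟩
          have hH : ((FH (m+2)).2 : Polynomial ℤ)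
              = (2*X+1) * (FH (m+1)).2 + 2 * (FH (m+1)).1 := by
            simp only [FH]
          rw [hrep, hH]
          linear_combination (2*(X:Polynomial ℤ)+1)^2 * hm + 4*(2*X+1) * hc + 4 * hf2
        · have hHm : (2*X+1) * ((FH (m+1)).2) - 2 * ((FH (m+1)).1) = (FH m).2 := by
            simp only [FH]
            ring
          have hsq : h^2 = ((FH m).2)^2 := by
            rw [hrep, ← hHm]
            linear_combination (2*(X:Polynomial ℤ)+1)^2 * hm + 4*(2*X+1) * hc + 4 * hf2
          rcases Nat.eq_zero_or_pos m with rfl | hmpos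
          · exfalso
            have hz : h^2 = 0 := by rw [hsq]; simp [FH]
            exact hh (pow_eq_zero_iff (by norm_num) |>.mp hz)
          · obtain ⟨k, rfl⟩ : ∃ k, m = k + 1 := ⟨m - 1, by omega⟩
            exact ⟨k, hsq⟩

private lemma H_rec (n : ℕ) :
    ((FH (n+2)).2 : Polynomial ℤ) = 2*(2*X+1) * (FH (n+1)).2 - (FH n).2 := by
  simp only [FH]
  ring

private lemma eval_H_ge (a : ℤ) :
    ∀ n : ℕ, |eval a ((FH n).2)| + 2 ≤ |eval a ((FH (n+1)).2)| := by
  intro n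
  induction n with
  | zero => simp [FH]
  | succ n ih =>
    have e := congrArg (eval a) (H_rec n)
    simp only [eval_sub, eval_mul, eval_add, eval_ofNat, eval_X, eval_one] at e
    rw [e]
    have hy : (1:ℤ) ≤ |2*a+1| := Int.one_le_abs (by omega)
    have h1 : |2*(2*a+1)*(eval a ((FH (n+1)).2))| - |eval a ((FH n).2)|
        ≤ |2*(2*a+1)*(eval a ((FH (n+1)).2)) - eval a ((FH n).2)| :=
      abs_sub_abs_le_abs_sub _ _
    have h2 : |2*(2*a+1)*(eval a ((FH (n+1)).2))|
        = 2 * |2*a+1| * |eval a ((FH (n+1)).2)| := by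
      rw [abs_mul, abs_mul]; norm_num
    nlinarith [abs_nonneg (eval a ((FH (n+1)).2)), abs_nonneg (eval a ((FH n).2)),
      mul_nonneg (sub_nonneg.mpr hy) (abs_nonneg (eval a ((FH (n+1)).2)))]

theorem shifted_square_times_x_sq_add_x_not_pellian (a : ℤ) :
    ¬ ∃ f g : Polynomial ℤ, g ≠ 0 ∧
      f ^ 2 - ((X - C a) ^ 2 * (X ^ 2 + X)) * g ^ 2 = 1 := by
  rintro ⟨f, g, hg, heq⟩
  have hh0 : (X - C a) * g ≠ 0 := mul_ne_zero (X_sub_C_ne_zero a) hg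
  have heq' : f^2 - (X^2+X) * ((X - C a) * g)^2 = 1 := by linear_combination heq
  obtain ⟨n, hn⟩ := classify ((X - C a) * g).natDegree f _ le_rfl heq' hh0
  have he := congrArg (eval a) hn
  simp only [eval_pow, eval_mul, eval_sub, eval_X, eval_C, sub_self, zero_mul] at he
  have hb := eval_H_ge a n
  have hz : eval a ((FH (n+1)).2) = 0 := by
    have := he.symm
    exact pow_eq_zero_iff (two_ne_zero) |>.mp this
  rw [hz] at hb
  have := abs_nonneg (eval a ((FH n).2))
  simp at hb
  omega
end

section
/- Each of the polynomials X²(X² + 1), X²(X² − 1), X²(X² + 2), X²(X² − 2), and X²(X² − 2X − 1) in ℤ[X] is Pellian over ℤ[X], i.e., for each such d there exist f, g ∈ ℤ[X] with g ≠ 0 and f² − d·g² = 1. -/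
open Polynomial

theorem five_nonsquarefree_quartics_pellian :
    (∃ f g : Polynomial ℤ, g ≠ 0 ∧ f ^ 2 - (X ^ 2 * (X ^ 2 + 1)) * g ^ 2 = 1) ∧
    (∃ f g : Polynomial ℤ, g ≠ 0 ∧ f ^ 2 - (X ^ 2 * (X ^ 2 - 1)) * g ^ 2 = 1) ∧
    (∃ f g : Polynomial ℤ, g ≠ 0 ∧ f ^ 2 - (X ^ 2 * (X ^ 2 + 2)) * g ^ 2 = 1) ∧
    (∃ f g : Polynomial ℤ, g ≠ 0 ∧ f ^ 2 - (X ^ 2 * (X ^ 2 - 2)) * g ^ 2 = 1) ∧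
    (∃ f g : Polynomial ℤ, g ≠ 0 ∧ f ^ 2 - (X ^ 2 * (X ^ 2 - 2 * X - 1)) * g ^ 2 = 1) := by
  refine ⟨⟨2 * X ^ 2 + 1, 2, ?_, by ring⟩,
          ⟨2 * X ^ 2 - 1, 2, ?_, by ring⟩,
          ⟨X ^ 2 + 1, 1, one_ne_zero, by ring⟩,
          ⟨X ^ 2 - 1, 1, one_ne_zero, by ring⟩,
          ⟨2 * (X - 1) ^ 4 - 4 * (X - 1) ^ 2 + 1, 2 * (X - 1) * (X - 2), ?_, by ring⟩⟩
  · intro h; have := congrArg (eval 0) h; simp at this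
  · intro h; have := congrArg (eval 0) h; simp at this
  · intro h; have := congrArg (eval 0) h; simp at this
end

section
/- Let a, b ∈ ℚ with a ≠ 0 and b ≠ 0, and let d(X) = X⁴ + ((8a − 2)/b²)·X² + (32a/b³)·X + ((16a² + 24a + 1)/b⁴) ∈ ℚ[X]. If d is squarefree, then d is Pellian over ℚ[X]: there exist f, g ∈ ℚ[X] with g ≠ 0 and f² − d·g² = 1. -/
open Polynomial

theorem torsion_order_four_family_pellian (a b : ℚ) (ha : a ≠ 0) (hb : b ≠ 0)
    (d : Polynomial ℚ)
    (hd : d = X ^ 4 + C ((8 * a - 2) / b ^ 2) * X ^ 2 + C (32 * a / b ^ 3) * X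
        + C ((16 * a ^ 2 + 24 * a + 1) / b ^ 4))
    (hsf : Squarefree d) :
    ∃ f g : Polynomial ℚ, g ≠ 0 ∧ f ^ 2 - d * g ^ 2 = 1 := by
  set k : ℚ := -1024 * a ^ 3 with hk
  have hk0 : k ≠ 0 := by
    simp [hk, pow_eq_zero_iff, ha]
  set f1 : Polynomial ℚ := C (b ^ 4) * X ^ 4 - C (2 * b ^ 3) * X ^ 3
      + C (8 * a * b ^ 2) * X ^ 2 + C ((8 * a + 2) * b) * X
      + C (16 * a ^ 2 - 16 * a - 1) with hf1
  set g1 : Polynomial ℚ := C (b ^ 4) * X ^ 2 - C (2 * b ^ 3) * X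
      + C ((4 * a + 1) * b ^ 2) with hg1
  refine ⟨C k⁻¹ * (f1 ^ 2 + d * g1 ^ 2), C k⁻¹ * (2 * f1 * g1), ?_, ?_⟩
  · -- g ≠ 0
    have hb4 : b ^ 4 ≠ 0 := pow_ne_zero _ hb
    have hf1n : f1 ≠ 0 := by
      intro h
      have h4 := congrArg (fun p => Polynomial.coeff p 4) h
      simp only [hf1, coeff_add, coeff_sub, coeff_C_mul, coeff_X_pow, coeff_X, coeff_C, coeff_zero] at h4
      norm_num at h4
      exact hb h4
    have hg1n : g1 ≠ 0 := by
      intro h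
      have h2 := congrArg (fun p => Polynomial.coeff p 2) h
      simp only [hg1, coeff_add, coeff_sub, coeff_C_mul, coeff_X_pow, coeff_X, coeff_C, coeff_zero] at h2
      norm_num at h2
      exact hb h2
    exact mul_ne_zero (by simpa using inv_ne_zero hk0)
      (mul_ne_zero (mul_ne_zero two_ne_zero hf1n) hg1n)
  · -- Pell identity
    have key : f1 ^ 2 - d * g1 ^ 2 = C k := by
      apply Polynomial.funext
      intro r
      simp only [hd, hf1, hg1, eval_add, eval_sub, eval_mul, eval_pow, eval_C, eval_X, hk]
      field_simp
      ring
    have hCk : (C k : Polynomial ℚ) * C k⁻¹ = 1 := by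
      rw [← C_mul, mul_inv_cancel₀ hk0, C_1]
    calc (C k⁻¹ * (f1 ^ 2 + d * g1 ^ 2)) ^ 2 - d * (C k⁻¹ * (2 * f1 * g1)) ^ 2
        = (C k⁻¹) ^ 2 * ((f1 ^ 2 - d * g1 ^ 2) ^ 2) := by ring
      _ = (C k⁻¹) ^ 2 * (C k) ^ 2 := by rw [key]
      _ = ((C k : Polynomial ℚ) * C k⁻¹) ^ 2 := by ring
      _ = 1 := by rw [hCk]; norm_num
end

section
/- Let a, b ∈ ℚ with a ≠ 0 and b ≠ 0, and let d(X) = X⁴ + ((−2a² + 12a − 2)/b²)·X² + (32a/b³)·X + ((a⁴ − 12a³ + 6a² + 20a + 1)/b⁴) ∈ ℚ[X]. If d is squarefree, then d is Pellian over ℚ[X]: there exist f, g ∈ ℚ[X] with g ≠ 0 and f² − d·g² = 1. -/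
open Polynomial

theorem torsion_order_five_family_pellian (a b : ℚ) (ha : a ≠ 0) (hb : b ≠ 0)
    (d : Polynomial ℚ)
    (hd : d = X ^ 4 + C ((-2 * a ^ 2 + 12 * a - 2) / b ^ 2) * X ^ 2
        + C (32 * a / b ^ 3) * X
        + C ((a ^ 4 - 12 * a ^ 3 + 6 * a ^ 2 + 20 * a + 1) / b ^ 4))
    (hsf : Squarefree d) :
    ∃ f g : Polynomial ℚ, g ≠ 0 ∧ f ^ 2 - d * g ^ 2 = 1 := by
  set F : Polynomial ℚ :=
      C (b ^ 5) * X ^ 5 + C ((a - 3) * b ^ 4) * X ^ 4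
        + C ((-2 * a ^ 2 + 12 * a + 2) * b ^ 3) * X ^ 3
        + C ((-2 * a ^ 3 + 18 * a ^ 2 - 10 * a + 2) * b ^ 2) * X ^ 2
        + C ((a ^ 4 - 12 * a ^ 3 + 34 * a ^ 2 - 20 * a - 3) * b) * X
        + C (a ^ 5 - 15 * a ^ 4 + 46 * a ^ 3 + 14 * a ^ 2 + 17 * a + 1) with hF
  set G : Polynomial ℚ :=
      C (b ^ 5) * X ^ 3 + C ((a - 3) * b ^ 4) * X ^ 2
        + C ((-a ^ 2 + 6 * a + 3) * b ^ 3) * X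
        + C ((-a ^ 3 + 9 * a ^ 2 - 7 * a - 1) * b ^ 2) with hG
  have hd' : C (b ^ 4) * d
      = C (b ^ 4) * X ^ 4 + C ((-2 * a ^ 2 + 12 * a - 2) * b ^ 2) * X ^ 2
        + C (32 * a * b) * X + C (a ^ 4 - 12 * a ^ 3 + 6 * a ^ 2 + 20 * a + 1) := by
    have h2 : b ^ 4 * ((-2 * a ^ 2 + 12 * a - 2) / b ^ 2) = (-2 * a ^ 2 + 12 * a - 2) * b ^ 2 := by
      field_simp
    have h1 : b ^ 4 * (32 * a / b ^ 3) = 32 * a * b := by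
      field_simp
    have h0 : b ^ 4 * ((a ^ 4 - 12 * a ^ 3 + 6 * a ^ 2 + 20 * a + 1) / b ^ 4)
        = a ^ 4 - 12 * a ^ 3 + 6 * a ^ 2 + 20 * a + 1 := by
      field_simp
    rw [hd]
    simp only [mul_add, ← mul_assoc, ← C_mul, h2, h1, h0]
  have key : C (b ^ 4) * (F ^ 2 - d * G ^ 2) = C (4096 * a ^ 4 * b ^ 4) := by
    have : C (b ^ 4) * (F ^ 2 - d * G ^ 2)
        = C (b ^ 4) * F ^ 2 - (C (b ^ 4) * d) * G ^ 2 := by ring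
    rw [this, hd', hF, hG]
    simp only [map_add, map_sub, map_mul, map_pow, map_neg, map_one, map_ofNat]
    ring
  have hb4 : (C (b ^ 4) : Polynomial ℚ) ≠ 0 := by
    simpa using pow_ne_zero 4 hb
  have hFG : F ^ 2 - d * G ^ 2 = C (4096 * a ^ 4) := by
    apply mul_left_cancel₀ hb4
    rw [key, ← C_mul]
    ring_nf
  refine ⟨C (1 / (64 * a ^ 2)) * F, C (1 / (64 * a ^ 2)) * G, ?_, ?_⟩
  · have ht : (1 : ℚ) / (64 * a ^ 2) ≠ 0 := by positivity
    have hGne : G ≠ 0 := by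
      intro h
      have h3 := congrArg (fun p => p.coeff 3) h
      simp only [hG, coeff_add, coeff_C_mul, coeff_X_pow, coeff_zero, coeff_C, coeff_X,
        mul_ite, mul_one, mul_zero] at h3
      norm_num at h3
      exact hb h3
    exact mul_ne_zero (by simpa using ht) hGne
  · have step : (C (1 / (64 * a ^ 2)) * F) ^ 2 - d * (C (1 / (64 * a ^ 2)) * G) ^ 2
        = C (1 / (64 * a ^ 2)) ^ 2 * (F ^ 2 - d * G ^ 2) := by ring
    rw [step, hFG, ← C_pow, ← C_mul]
    have : (1 / (64 * a ^ 2)) ^ 2 * (4096 * a ^ 4) = 1 := by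
      field_simp; ring
    rw [this, C_1]
end

section
/- Let a, b ∈ ℚ with a ≠ 0 and b ≠ 0, and let d(X) = X⁴ + ((6a² + 12a − 2)/b²)·X² + ((32a² + 32a)/b³)·X + ((9a⁴ + 4a³ + 30a² + 20a + 1)/b⁴) ∈ ℚ[X]. If d is squarefree, then d is Pellian over ℚ[X]: there exist f, g ∈ ℚ[X] with g ≠ 0 and f² − d·g² = 1. -/
open Polynomial

theorem torsion_order_six_family_pellian (a b : ℚ) (ha : a ≠ 0) (hb : b ≠ 0)
    (d : Polynomial ℚ)
    (hd : d = X ^ 4 + C ((6 * a ^ 2 + 12 * a - 2) / b ^ 2) * X ^ 2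
        + C ((32 * a ^ 2 + 32 * a) / b ^ 3) * X
        + C ((9 * a ^ 4 + 4 * a ^ 3 + 30 * a ^ 2 + 20 * a + 1) / b ^ 4))
    (hsf : Squarefree d) :
    ∃ f g : Polynomial ℚ, g ≠ 0 ∧ f ^ 2 - d * g ^ 2 = 1 := by
  -- a ≠ -1, else d is a square
  have ha1 : a + 1 ≠ 0 := by
    intro h1
    have ha' : a = -1 := by linarith
    subst ha'
    have hdsq : d = (X ^ 2 + C (-4 / b ^ 2)) ^ 2 := by
      rw [hd]
      have e2 : (6 * (-1 : ℚ) ^ 2 + 12 * (-1) - 2) / b ^ 2 = (-4 / b ^ 2) + (-4 / b ^ 2) := by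
        ring
      have e1 : (32 * (-1 : ℚ) ^ 2 + 32 * (-1)) / b ^ 3 = 0 := by norm_num
      have e0 : (9 * (-1 : ℚ) ^ 4 + 4 * (-1) ^ 3 + 30 * (-1) ^ 2 + 20 * (-1) + 1) / b ^ 4
          = (-4 / b ^ 2) * (-4 / b ^ 2) := by
        field_simp
        ring
      rw [e2, e1, e0]
      simp only [map_add, map_mul, map_zero]
      ring
    have hdvd : (X ^ 2 + C (-4 / b ^ 2)) * (X ^ 2 + C (-4 / b ^ 2)) ∣ d := by
      rw [hdsq]; exact ⟨1, by ring⟩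
    have hu := hsf _ hdvd
    have hdeg := Polynomial.natDegree_eq_zero_of_isUnit hu
    rw [Polynomial.natDegree_X_pow_add_C] at hdeg
    norm_num at hdeg
  set c : ℚ := -16384 * a ^ 5 * (a + 1) ^ 4 with hcdef
  have hc : c ≠ 0 := by
    simp only [hcdef]
    positivity
  set FF : Polynomial ℚ :=
      C (b ^ 6) * X ^ 6 + C (-4 * b ^ 5) * X ^ 5 + C ((5 + 18 * a + 9 * a ^ 2) * b ^ 4) * X ^ 4
        + C (-32 * a * b ^ 3) * X ^ 3
        + C ((-5 - 12 * a + 34 * a ^ 2 + 84 * a ^ 3 + 27 * a ^ 4) * b ^ 2) * X ^ 2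
        + C ((4 + 48 * a + 56 * a ^ 2 + 112 * a ^ 3 + 36 * a ^ 4) * b) * X
        + C (-1 - 22 * a - 99 * a ^ 2 - 100 * a ^ 3 + 105 * a ^ 4 + 90 * a ^ 5 + 27 * a ^ 6)
      with hFF
  set GG : Polynomial ℚ :=
      C (b ^ 6) * X ^ 4 + C (-4 * b ^ 5) * X ^ 3 + C ((6 + 12 * a + 6 * a ^ 2) * b ^ 4) * X ^ 2
        + C ((-4 - 24 * a - 4 * a ^ 2) * b ^ 3) * X
        + C ((1 + 12 * a + 14 * a ^ 2 + 28 * a ^ 3 + 9 * a ^ 4) * b ^ 2)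
      with hGG
  -- b^4 * d is division-free
  have hDb : C (b ^ 4) * d
      = C (b ^ 4) * X ^ 4 + C ((6 * a ^ 2 + 12 * a - 2) * b ^ 2) * X ^ 2
        + C ((32 * a ^ 2 + 32 * a) * b) * X
        + C (9 * a ^ 4 + 4 * a ^ 3 + 30 * a ^ 2 + 20 * a + 1) := by
    have e2 : b ^ 4 * ((6 * a ^ 2 + 12 * a - 2) / b ^ 2) = (6 * a ^ 2 + 12 * a - 2) * b ^ 2 := by
      field_simp
    have e1 : b ^ 4 * ((32 * a ^ 2 + 32 * a) / b ^ 3) = (32 * a ^ 2 + 32 * a) * b := by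
      field_simp
    have e0 : b ^ 4 * ((9 * a ^ 4 + 4 * a ^ 3 + 30 * a ^ 2 + 20 * a + 1) / b ^ 4)
        = 9 * a ^ 4 + 4 * a ^ 3 + 30 * a ^ 2 + 20 * a + 1 := by
      field_simp
    rw [hd]
    simp only [mul_add, ← mul_assoc, ← C_mul]
    rw [e2, e1, e0]
  have hb4 : (C (b ^ 4) : Polynomial ℚ) ≠ 0 := by
    simpa using pow_ne_zero 4 hb
  have hkey : FF ^ 2 - d * GG ^ 2 = C c := by
    apply mul_left_cancel₀ hb4
    calc C (b ^ 4) * (FF ^ 2 - d * GG ^ 2)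
        = C (b ^ 4) * FF ^ 2 - (C (b ^ 4) * d) * GG ^ 2 := by ring
      _ = C (b ^ 4) * FF ^ 2
          - (C (b ^ 4) * X ^ 4 + C ((6 * a ^ 2 + 12 * a - 2) * b ^ 2) * X ^ 2
            + C ((32 * a ^ 2 + 32 * a) * b) * X
            + C (9 * a ^ 4 + 4 * a ^ 3 + 30 * a ^ 2 + 20 * a + 1)) * GG ^ 2 := by rw [hDb]
      _ = C (b ^ 4) * C c := by
          rw [hFF, hGG, hcdef]
          simp only [map_mul, map_add, map_sub, map_pow, map_neg, map_one, map_ofNat]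
          ring
  set r : ℚ := 2 / c with hrdef
  have hr : r ≠ 0 := by
    simp only [hrdef]
    exact div_ne_zero two_ne_zero hc
  have hCrc : (C r : Polynomial ℚ) * C c = 2 := by
    rw [← C_mul]
    have : r * c = 2 := by
      rw [hrdef]; field_simp
    rw [this]
    exact map_ofNat C 2
  refine ⟨C r * FF ^ 2 - 1, C r * (FF * GG), ?_, ?_⟩
  · have hFne : FF ≠ 0 := by
      intro h
      have h6 := congrArg (fun p => Polynomial.coeff p 6) h
      simp only [hFF, coeff_add, coeff_C_mul, coeff_X_pow, coeff_X, coeff_C] at h6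
      norm_num at h6
      exact hb h6
    have hGne : GG ≠ 0 := by
      intro h
      have h4 := congrArg (fun p => Polynomial.coeff p 4) h
      simp only [hGG, coeff_add, coeff_C_mul, coeff_X_pow, coeff_X, coeff_C] at h4
      norm_num at h4
      exact hb h4
    exact mul_ne_zero (by simpa using hr) (mul_ne_zero hFne hGne)
  · linear_combination (C r ^ 2 * FF ^ 2) * hkey + (C r * FF ^ 2) * hCrc
end

section
/- Let a, b ∈ ℚ with a ≠ 0 and b ≠ 0. Let d(X) = X⁴ + ((8a − 2)/b²)·X² + (32a/b³)·X + ((16a² + 24a + 1)/b⁴) ∈ ℚ[X], and define f(X) = (256a⁴ + 224a² + 32a + 1)/(512a³) + ((64a³b − 48a²b − 20ab − b)/(128a³))·X + ((64a³b² − 48a²b² + 4ab² + b²)/(128a³))·X² + ((16a²b³ + 24ab³ + b³)/(128a³))·X³ + ((48a²b⁴ − 32ab⁴ − 5b⁴)/(256a³))·X⁴ + ((−4ab⁵ + b⁵)/(128a³))·X⁵ + ((4ab⁶ + b⁶)/(128a³))·X⁶ + (−b⁷/(128a³))·X⁷ + (b⁸/(512a³))·X⁸ and g(X) = (64a³b²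 − 48a²b² − 20ab² − b²)/(512a³) + ((12ab³ + b³)/(128a³))·X + ((48a²b⁴ − 24ab⁴ − 5b⁴)/(512a³))·X² + (−b⁵/(32a²))·X³ + ((12ab⁶ + 5b⁶)/(512a³))·X⁴ + (−b⁷/(128a³))·X⁵ + (b⁸/(512a³))·X⁶. Then f(X)² − d(X)·g(X)² = 1 in ℚ[X]. -/
open Polynomial

set_option maxHeartbeats 4000000 in
theorem explicit_pell_solution_torsion_order_four_family
    (a b : ℚ) (ha : a ≠ 0) (hb : b ≠ 0)
    (d f g : Polynomial ℚ)
    (hd : d = X ^ 4 + C ((8 * a - 2) / b ^ 2) * X ^ 2 + C (32 * a / b ^ 3) * X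
        + C ((16 * a ^ 2 + 24 * a + 1) / b ^ 4))
    (hf : f = C ((256 * a ^ 4 + 224 * a ^ 2 + 32 * a + 1) / (512 * a ^ 3))
        + C ((64 * a ^ 3 * b - 48 * a ^ 2 * b - 20 * a * b - b) / (128 * a ^ 3)) * X
        + C ((64 * a ^ 3 * b ^ 2 - 48 * a ^ 2 * b ^ 2 + 4 * a * b ^ 2 + b ^ 2) / (128 * a ^ 3)) * X ^ 2
        + C ((16 * a ^ 2 * b ^ 3 + 24 * a * b ^ 3 + b ^ 3) / (128 * a ^ 3)) * X ^ 3
        + C ((48 * a ^ 2 * b ^ 4 - 32 * a * b ^ 4 - 5 * b ^ 4) / (256 * a ^ 3)) * X ^ 4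
        + C ((-4 * a * b ^ 5 + b ^ 5) / (128 * a ^ 3)) * X ^ 5
        + C ((4 * a * b ^ 6 + b ^ 6) / (128 * a ^ 3)) * X ^ 6
        + C (-b ^ 7 / (128 * a ^ 3)) * X ^ 7
        + C (b ^ 8 / (512 * a ^ 3)) * X ^ 8)
    (hg : g = C ((64 * a ^ 3 * b ^ 2 - 48 * a ^ 2 * b ^ 2 - 20 * a * b ^ 2 - b ^ 2) / (512 * a ^ 3))
        + C ((12 * a * b ^ 3 + b ^ 3) / (128 * a ^ 3)) * X
        + C ((48 * a ^ 2 * b ^ 4 - 24 * a * b ^ 4 - 5 * b ^ 4) / (512 * a ^ 3)) * X ^ 2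
        + C (-b ^ 5 / (32 * a ^ 2)) * X ^ 3
        + C ((12 * a * b ^ 6 + 5 * b ^ 6) / (512 * a ^ 3)) * X ^ 4
        + C (-b ^ 7 / (128 * a ^ 3)) * X ^ 5
        + C (b ^ 8 / (512 * a ^ 3)) * X ^ 6) :
    f ^ 2 - d * g ^ 2 = 1 := by
  subst hd hf hg
  apply Polynomial.funext
  intro x
  simp only [eval_add, eval_sub, eval_mul, eval_pow, eval_C, eval_X, eval_one]
  field_simp
  ring
end
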